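/- arXiv:1105.0949 — 8 statements merged into one kernel-verified Lean document; each statement's English description precedes it below -/
import Mathlib

section
/- Let L(x) denote the 4×4 block matrix [[σ(x)⁻¹I₂, σ₁⁻¹R⊥], [−σ₁⁻¹R⊥, σ(x)⁻¹I₂]] (the translated tensor L_c at c = 1/σ₁), and let g := f₁σ₁(σ₁−σ₂)/(σ₁+σ₂) + 2σ₁σ₂/(σ₁+σ₂). For an integrable field J : Ω → ℝ⁴ the following are equivalent: (i) L(x)J(x) = (1/g)·[[I₂, R⊥],[−R⊥, I₂]]·⟨J⟩ for almost every x ∈ Ω; (ii) there exist real numbers a₁, a₂ such that L(x)J(x) = (a₁, a₂, −a₂, a₁)ᵀ for almost every x ∈ Ω. -/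
open MeasureTheory Matrix

noncomputable section

/-- Average of a scalar function over `Ω`. -/
def avg (Ω : Set (Fin 2 → ℝ)) (h : (Fin 2 → ℝ) → ℝ) : ℝ :=
  ((volume Ω).toReal)⁻¹ * ∫ x in Ω, h x

/-- The 4×4 block matrix `[[I₂, R⊥], [-R⊥, I₂]]`. -/
def blockIRperp : Matrix (Fin 4) (Fin 4) ℝ :=
  !![1, 0, 0, 1;
     0, 1, -1, 0;
     0, -1, 1, 0;
     1, 0, 0, 1]

lemma blockIRperp_mulVec (u : Fin 4 → ℝ) :
    blockIRperp.mulVec u = ![u 0 + u 3, u 1 - u 2, -(u 1 - u 2), u 0 + u 3] := by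
  funext i
  fin_cases i <;>
    simp [blockIRperp, Matrix.mulVec, dotProduct, Fin.sum_univ_four] <;> ring

lemma matL_mulVec (s t : ℝ) (j : Fin 4 → ℝ) :
    (!![s, 0, 0, t; 0, s, -t, 0; 0, -t, s, 0; t, 0, 0, s] :
        Matrix (Fin 4) (Fin 4) ℝ).mulVec j =
      ![s * j 0 + t * j 3, s * j 1 - t * j 2, -(t * j 1) + s * j 2, t * j 0 + s * j 3] := by
  funext i
  fin_cases i <;>
    simp [Matrix.mulVec, dotProduct, Fin.sum_univ_four] <;> ring

lemma scalar_helper (s t b u1 u2 : ℝ) (hs : 0 < s) (ht : 0 < t)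
    (h1 : s⁻¹ * u1 + t⁻¹ * u2 = b) (h2 : t⁻¹ * u1 + s⁻¹ * u2 = b) :
    u1 + u2 = 2 * s * t / (s + t) * b := by
  have hs' : s ≠ 0 := hs.ne'
  have ht' : t ≠ 0 := ht.ne'
  have hst : s + t ≠ 0 := by positivity
  rw [div_mul_eq_mul_div, eq_div_iff hst]
  field_simp at h1 h2
  linear_combination h1 + h2

/-- Equivalence of the two forms of the attainability condition for the translation
lower bound (Theorem 3.1 of the paper). -/
theorem lower_bound_attainability_equiv
    (Ω : Set (Fin 2 → ℝ)) (hΩmeas : MeasurableSet Ω)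
    (hΩbdd : Bornology.IsBounded Ω) (hΩpos : 0 < (volume Ω).toReal)
    (χ₁ : (Fin 2 → ℝ) → ℝ) (hχmeas : Measurable χ₁)
    (hχ01 : ∀ x, χ₁ x = 0 ∨ χ₁ x = 1)
    (σ₁ σ₂ : ℝ) (hσ₂ : 0 < σ₂) (hσ : σ₂ < σ₁)
    (σ : (Fin 2 → ℝ) → ℝ)
    (hσdef : ∀ x, σ x = σ₁ * χ₁ x + σ₂ * (1 - χ₁ x))
    (f₁ : ℝ) (hf₁ : f₁ = avg Ω χ₁)
    -- `L x` is the translated tensor `L_c` at `c = 1/σ₁`: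
    -- the block matrix `[[σ(x)⁻¹ I₂, σ₁⁻¹ R⊥], [-σ₁⁻¹ R⊥, σ(x)⁻¹ I₂]]`
    (L : (Fin 2 → ℝ) → Matrix (Fin 4) (Fin 4) ℝ)
    (hL : ∀ x, L x = !![(σ x)⁻¹, 0, 0, σ₁⁻¹;
                        0, (σ x)⁻¹, -σ₁⁻¹, 0;
                        0, -σ₁⁻¹, (σ x)⁻¹, 0;
                        σ₁⁻¹, 0, 0, (σ x)⁻¹])
    (g : ℝ) (hg : g = f₁ * σ₁ * (σ₁ - σ₂) / (σ₁ + σ₂) + 2 * σ₁ * σ₂ / (σ₁ + σ₂))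
    (J : (Fin 2 → ℝ) → (Fin 4 → ℝ))
    (hJint : ∀ i : Fin 4, Integrable (fun x => J x i) (volume.restrict Ω))
    (avgJ : Fin 4 → ℝ) (havgJ : ∀ i, avgJ i = avg Ω (fun x => J x i)) :
    (∀ᵐ x ∂(volume.restrict Ω),
        (L x).mulVec (J x) = g⁻¹ • blockIRperp.mulVec avgJ) ↔
    (∃ a₁ a₂ : ℝ, ∀ᵐ x ∂(volume.restrict Ω),
        (L x).mulVec (J x) = ![a₁, a₂, -a₂, a₁]) := by
  have hσ₁pos : 0 < σ₁ := hσ₂.trans hσ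
  have hσ₁₂ : (0:ℝ) < σ₁ + σ₂ := by linarith
  have hT : (volume Ω).toReal ≠ 0 := hΩpos.ne'
  constructor
  · intro h
    refine ⟨g⁻¹ * (avgJ 0 + avgJ 3), g⁻¹ * (avgJ 1 - avgJ 2), ?_⟩
    filter_upwards [h] with x hx
    rw [hx, blockIRperp_mulVec]
    funext i
    fin_cases i <;> simp <;> ring
  · rintro ⟨a₁, a₂, h⟩
    have hfin : volume Ω < ⊤ := hΩbdd.measure_lt_top
    haveI : IsFiniteMeasure (volume.restrict Ω) :=
      ⟨by rwa [Measure.restrict_apply_univ]⟩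
    set c₂ : ℝ := 2 * σ₁ * σ₂ / (σ₁ + σ₂) with hc₂
    have hc₂pos : 0 < c₂ := by positivity
    set d : ℝ := σ₁ - c₂ with hd
    have hdnn : 0 ≤ d := by
      rw [hd, hc₂, sub_nonneg, div_le_iff₀ hσ₁₂]
      nlinarith
    have hχint : Integrable χ₁ (volume.restrict Ω) := by
      refine (integrable_const (1:ℝ)).mono' hχmeas.aestronglyMeasurable ?_
      refine Filter.Eventually.of_forall fun x => ?_
      rcases hχ01 x with hx | hx <;> simp [hx]
    have hf₁nn : 0 ≤ f₁ := by
      rw [hf₁]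
      unfold avg
      apply mul_nonneg (by positivity)
      apply integral_nonneg
      intro x
      rcases hχ01 x with hx | hx <;> simp [hx]
    have hgval : g = c₂ + d * f₁ := by
      rw [hg, hd, hc₂]; field_simp; ring
    have hgpos : 0 < g := by rw [hgval]; nlinarith
    have hgne : g ≠ 0 := ne_of_gt hgpos
    -- pointwise consequences of the hypothesis
    have key : ∀ᵐ x ∂(volume.restrict Ω),
        J x 0 + J x 3 = (c₂ + d * χ₁ x) * a₁ ∧
        J x 1 - J x 2 = (c₂ + d * χ₁ x) * a₂ := by
      filter_upwards [h] with x hx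
      rw [hL, matL_mulVec] at hx
      have h0 := congrFun hx 0
      have h1 := congrFun hx 1
      have h2 := congrFun hx 2
      have h3 := congrFun hx 3
      simp only [Matrix.cons_val_zero, Matrix.cons_val_one, Matrix.head_cons,
        Matrix.cons_val_two, Matrix.cons_val_three, Matrix.tail_cons] at h0 h1 h2 h3
      have h2' : σ₁⁻¹ * (J x 1) + (σ x)⁻¹ * (-(J x 2)) = a₂ := by linarith
      have h1' : (σ x)⁻¹ * (J x 1) + σ₁⁻¹ * (-(J x 2)) = a₂ := by linarith
      rcases hχ01 x with hc | hc
      · have hσx : σ x = σ₂ := by rw [hσdef, hc]; ring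
        rw [hσx] at h0 h3 h1' h2'
        have e1 := scalar_helper σ₂ σ₁ a₁ (J x 0) (J x 3) hσ₂ hσ₁pos h0 h3
        have e2 := scalar_helper σ₂ σ₁ a₂ (J x 1) (-(J x 2)) hσ₂ hσ₁pos h1' h2'
        rw [hc]
        constructor
        · rw [e1, hc₂]; ring
        · rw [show J x 1 - J x 2 = J x 1 + -(J x 2) by ring, e2, hc₂]; ring
      · have hσx : σ x = σ₁ := by rw [hσdef, hc]; ring
        rw [hσx] at h0 h3 h1' h2'
        have e1 := scalar_helper σ₁ σ₁ a₁ (J x 0) (J x 3) hσ₁pos hσ₁pos h0 h3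
        have e2 := scalar_helper σ₁ σ₁ a₂ (J x 1) (-(J x 2)) hσ₁pos hσ₁pos h1' h2'
        have hval : 2 * σ₁ * σ₁ / (σ₁ + σ₁) = σ₁ := by
          rw [div_eq_iff (by positivity)]; ring
        rw [hval] at e1 e2
        rw [hc, hd]
        constructor
        · rw [e1]; ring
        · rw [show J x 1 - J x 2 = J x 1 + -(J x 2) by ring, e2]; ring
    -- integral of the right-hand side
    have hcint : ∀ b : ℝ, ∫ x in Ω, (c₂ + d * χ₁ x) * b
        = (c₂ + d * f₁) * b * (volume Ω).toReal := by
      intro b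
      have hrw : ∀ x, (c₂ + d * χ₁ x) * b = c₂ * b + (d * b) * χ₁ x := fun x => by ring
      simp_rw [hrw]
      rw [integral_add (integrable_const _) (hχint.const_mul _), integral_const,
        integral_const_mul]
      have hf : ∫ x in Ω, χ₁ x = f₁ * (volume Ω).toReal := by
        rw [hf₁]
        unfold avg
        field_simp
        try ring
      rw [hf]
      simp only [Measure.restrict_apply_univ, measureReal_def, smul_eq_mul]
      ring
    have havg03 : avgJ 0 + avgJ 3 = g * a₁ := by
      rw [havgJ 0, havgJ 3]
      unfold avg
      rw [← mul_add, ← integral_add (hJint 0) (hJint 3)]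
      rw [integral_congr_ae (key.mono fun x hx => hx.1), hcint a₁, hgval]
      field_simp
      try ring
    have havg12 : avgJ 1 - avgJ 2 = g * a₂ := by
      rw [havgJ 1, havgJ 2]
      unfold avg
      rw [← mul_sub, ← integral_sub (hJint 1) (hJint 2)]
      rw [integral_congr_ae (key.mono fun x hx => hx.2), hcint a₂, hgval]
      field_simp
      try ring
    have hvec : g⁻¹ • blockIRperp.mulVec avgJ = ![a₁, a₂, -a₂, a₁] := by
      rw [blockIRperp_mulVec, havg03, havg12]
      funext i
      fin_cases i <;> simp [hgne] <;> field_simp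
    filter_upwards [h] with x hx
    rw [hx, hvec]
end
end

section
/- Let L'(x) denote the 4×4 block matrix [[σ(x)I₂, σ₂R⊥], [−σ₂R⊥, σ(x)I₂]] (the translated tensor L'_c at c = σ₂), and let g' := f₂/σ₂ + 2f₁/(σ₁+σ₂). For an integrable field E : Ω → ℝ⁴ the following are equivalent: (i) L'(x)E(x) = (1/g')·[[I₂, R⊥],[−R⊥, I₂]]·⟨E⟩ for almost every x ∈ Ω; (ii) there exist real numbers a₁, a₂ such that L'(x)E(x) = (a₁, a₂, −a₂, a₁)ᵀ for almost every x ∈ Ω. -/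
open MeasureTheory Matrix

noncomputable section

/-- Equivalence of the two forms of the attainability condition for the translation
upper bound (the dual of Theorem 3.1 of the paper). -/
theorem upper_bound_attainability_equiv
    (Ω : Set (Fin 2 → ℝ)) (hΩmeas : MeasurableSet Ω)
    (hΩbdd : Bornology.IsBounded Ω) (hΩpos : 0 < (volume Ω).toReal)
    (χ₁ : (Fin 2 → ℝ) → ℝ) (hχmeas : Measurable χ₁)
    (hχ01 : ∀ x, χ₁ x = 0 ∨ χ₁ x = 1)
    (σ₁ σ₂ : ℝ) (hσ₂ : 0 < σ₂) (hσ : σ₂ < σ₁)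
    (σ : (Fin 2 → ℝ) → ℝ)
    (hσdef : ∀ x, σ x = σ₁ * χ₁ x + σ₂ * (1 - χ₁ x))
    (f₁ f₂ : ℝ) (hf₁ : f₁ = avg Ω χ₁) (hf₂ : f₂ = 1 - f₁)
    -- `L' x` is the translated tensor `L'_c` at `c = σ₂`:
    -- the block matrix `[[σ(x) I₂, σ₂ R⊥], [-σ₂ R⊥, σ(x) I₂]]`
    (L' : (Fin 2 → ℝ) → Matrix (Fin 4) (Fin 4) ℝ)
    (hL' : ∀ x, L' x = !![σ x, 0, 0, σ₂;
                          0, σ x, -σ₂, 0;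
                          0, -σ₂, σ x, 0;
                          σ₂, 0, 0, σ x])
    (g' : ℝ) (hg' : g' = f₂ / σ₂ + 2 * f₁ / (σ₁ + σ₂))
    (E : (Fin 2 → ℝ) → (Fin 4 → ℝ))
    (hEint : ∀ i : Fin 4, Integrable (fun x => E x i) (volume.restrict Ω))
    (avgE : Fin 4 → ℝ) (havgE : ∀ i, avgE i = avg Ω (fun x => E x i)) :
    (∀ᵐ x ∂(volume.restrict Ω),
        (L' x).mulVec (E x) = g'⁻¹ • blockIRperp.mulVec avgE) ↔
    (∃ a₁ a₂ : ℝ, ∀ᵐ x ∂(volume.restrict Ω),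
        (L' x).mulVec (E x) = ![a₁, a₂, -a₂, a₁]) := by

  have hσ₂' : σ₂ ≠ 0 := ne_of_gt hσ₂
  have hσ12 : (0:ℝ) < σ₁ + σ₂ := by linarith
  have hσ12' : σ₁ + σ₂ ≠ 0 := ne_of_gt hσ12
  have hV0 : ((volume Ω).toReal)⁻¹ * (volume Ω).toReal = 1 :=
    inv_mul_cancel₀ (ne_of_gt hΩpos)
  haveI : IsFiniteMeasure (volume.restrict Ω) :=
    ⟨by rw [Measure.restrict_apply_univ]; exact hΩbdd.measure_lt_top⟩
  have hχint : Integrable χ₁ (volume.restrict Ω) := by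
    refine (integrable_const (1:ℝ)).mono' hχmeas.aestronglyMeasurable ?_
    filter_upwards with x
    rcases hχ01 x with h | h <;> simp [h]
  have hf₁0 : 0 ≤ f₁ := by
    rw [hf₁]
    unfold avg
    refine mul_nonneg (by positivity) ?_
    refine integral_nonneg fun x => ?_
    rcases hχ01 x with h | h <;> simp [h]
  have hf₁1 : f₁ ≤ 1 := by
    rw [hf₁]
    unfold avg
    have hle : (∫ x in Ω, χ₁ x) ≤ ∫ _ in Ω, (1:ℝ) := by
      refine integral_mono hχint (integrable_const 1) fun x => ?_
      rcases hχ01 x with h | h <;> simp [h]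
    have h1 : (∫ _ in Ω, (1:ℝ)) = (volume Ω).toReal := by
      rw [setIntegral_const]; simp; rfl
    calc ((volume Ω).toReal)⁻¹ * ∫ x in Ω, χ₁ x
        ≤ ((volume Ω).toReal)⁻¹ * (volume Ω).toReal := by
          refine mul_le_mul_of_nonneg_left ?_ (by positivity)
          rw [← h1]; exact hle
      _ = 1 := hV0
  have hg'pos : 0 < g' := by
    rw [hg', hf₂, div_add_div _ _ hσ₂' hσ12']
    apply div_pos
    · nlinarith
    · positivity
  have hg'ne : g' ≠ 0 := ne_of_gt hg'pos
  have key : ∀ (a : ℝ) (F : (Fin 2 → ℝ) → ℝ), Integrable F (volume.restrict Ω) →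
      (∀ᵐ x ∂(volume.restrict Ω), (σ x + σ₂) * F x = 2 * a) →
      ((volume Ω).toReal)⁻¹ * ∫ x in Ω, F x = g' * a := by
    intro a F hFint hae
    set p : ℝ := 2 * a / (σ₁ + σ₂) with hp
    set q : ℝ := a / σ₂ with hq
    have hae2 : ∀ᵐ x ∂(volume.restrict Ω), F x = (p - q) * χ₁ x + q := by
      filter_upwards [hae] with x hx
      rcases hχ01 x with h | h
      · have hs : σ x = σ₂ := by rw [hσdef x, h]; ring
        rw [hs] at hx
        have hF : F x = q := by
          rw [hq, eq_div_iff hσ₂']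
          linear_combination hx / 2
        rw [hF, h]; ring
      · have hs : σ x = σ₁ := by rw [hσdef x, h]; ring
        rw [hs] at hx
        have hF : F x = p := by
          rw [hp, eq_div_iff hσ12']
          linear_combination hx
        rw [hF, h]; ring
    have hint : (∫ x in Ω, F x)
        = (p - q) * (∫ x in Ω, χ₁ x) + q * (volume Ω).toReal := by
      rw [integral_congr_ae hae2,
        integral_add (hχint.const_mul (p - q)) (integrable_const q),
        integral_const_mul, setIntegral_const]
      simp [mul_comm, Measure.real]
    have hf₁' : f₁ = ((volume Ω).toReal)⁻¹ * ∫ x in Ω, χ₁ x := hf₁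
    rw [hint, mul_add, ← mul_assoc, mul_comm (((volume Ω).toReal)⁻¹) (p - q),
      mul_assoc, ← hf₁', ← mul_assoc, mul_comm (((volume Ω).toReal)⁻¹) q,
      mul_assoc, hV0, mul_one, hg', hf₂, hp, hq]
    field_simp
    ring
  constructor
  · rintro h
    refine ⟨g'⁻¹ * (avgE 0 + avgE 3), g'⁻¹ * (avgE 1 - avgE 2), ?_⟩
    filter_upwards [h] with x hx
    rw [hx]
    funext i
    fin_cases i <;>
      simp [blockIRperp, Matrix.mulVec, dotProduct, Fin.sum_univ_four] <;>
      first | tauto | ring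
  · rintro ⟨a₁, a₂, h⟩
    have h03 : ∀ᵐ x ∂(volume.restrict Ω),
        (σ x + σ₂) * (E x 0 + E x 3) = 2 * a₁ := by
      filter_upwards [h] with x hx
      have h0 := congrFun hx 0
      have h3 := congrFun hx 3
      rw [hL' x] at h0 h3
      simp [Matrix.mulVec, dotProduct, Fin.sum_univ_four] at h0 h3
      linear_combination h0 + h3
    have h12 : ∀ᵐ x ∂(volume.restrict Ω),
        (σ x + σ₂) * (E x 1 - E x 2) = 2 * a₂ := by
      filter_upwards [h] with x hx
      have h1 := congrFun hx 1
      have h2 := congrFun hx 2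
      rw [hL' x] at h1 h2
      simp [Matrix.mulVec, dotProduct, Fin.sum_univ_four] at h1 h2
      linear_combination h1 - h2
    have k03 := key a₁ (fun x => E x 0 + E x 3) ((hEint 0).add (hEint 3)) h03
    have k12 := key a₂ (fun x => E x 1 - E x 2) ((hEint 1).sub (hEint 2)) h12
    have e03 : avgE 0 + avgE 3 = g' * a₁ := by
      rw [havgE 0, havgE 3]
      unfold avg
      rw [← mul_add, ← integral_add (hEint 0) (hEint 3)]
      exact k03
    have e12 : avgE 1 - avgE 2 = g' * a₂ := by
      rw [havgE 1, havgE 2]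
      unfold avg
      rw [← mul_sub, ← integral_sub (hEint 1) (hEint 2)]
      exact k12
    filter_upwards [h] with x hx
    rw [hx]
    funext i
    fin_cases i <;>
      simp [blockIRperp, Matrix.mulVec, dotProduct, Fin.sum_univ_four] <;>
      first
        | tauto
        | (field_simp
           linarith [e03, e12])
end
end

section
/- Let Ω ⊆ ℝ² be open, P ⊆ Ω open (the phase-1 region), Q := Ω ∖ closure(P) (the phase-2 region), and σ₁ > σ₂ > 0. Suppose V, W : Ω → ℝ are continuous, differentiable at every point of P ∪ Q, and satisfy σ₁∇V = σ₂R⊥∇W on P and ∇V = R⊥∇W on Q (this encodes the conductivity equation ∇·σ∇V = 0 with flux potential W, i.e. −σ∇V = −σ₂R⊥∇W with σ = σ₁ on P and σ = σ₂ on Q). Assume the field is uniform in phase 1: ∇V ≡ (−e₁, −e₂) on P for constants e₁, e₂. Define V'(x,y) := −W(x,y) + (σ₁/σ₂ + 1)(e₂x − e₁y) and W'(x,y) := V(x,y) + (σ₁/σ₂ + 1)(e₁x + e₂y). Then V', W' are continuous on Ω, differentiable on P ∪ Q, satisfy σ₁∇V' = σ₂R⊥∇W' on P and ∇V' = R⊥∇W'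 on Q, and at every point of P ∪ Q the 4-vector [[σI₂, σ₂R⊥],[−σ₂R⊥, σI₂]]·(−∇V, −∇V')ᵀ equals (σ₁+σ₂)·(e₁, e₂, −e₂, e₁)ᵀ; i.e., the pair (V, V') satisfies the attainability condition for the upper bound on the volume fraction. -/
open Matrix

noncomputable section

lemma grad_apply (f : EuclideanSpace ℝ (Fin 2) → ℝ) (x : EuclideanSpace ℝ (Fin 2)) (i : Fin 2) :
    gradient f x i = fderiv ℝ f x (EuclideanSpace.single i 1) := by
  have h : (inner ℝ (gradient f x) (EuclideanSpace.single i 1) : ℝ)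
      = fderiv ℝ f x (EuclideanSpace.single i 1) := by
    rw [gradient]; exact InnerProductSpace.toDual_symm_apply
  rw [← h, EuclideanSpace.inner_single_right]
  simp

lemma hasFDeriv_combo (f : EuclideanSpace ℝ (Fin 2) → ℝ) (x : EuclideanSpace ℝ (Fin 2))
    (hf : DifferentiableAt ℝ f x) (s a b : ℝ) :
    HasFDerivAt (fun p : EuclideanSpace ℝ (Fin 2) => s * f p + (a * p 0 + b * p 1))
      (s • fderiv ℝ f x + (a • (EuclideanSpace.proj (0 : Fin 2) : EuclideanSpace ℝ (Fin 2) →L[ℝ] ℝ)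
        + b • (EuclideanSpace.proj (1 : Fin 2) : EuclideanSpace ℝ (Fin 2) →L[ℝ] ℝ))) x := by
  have h0 : HasFDerivAt (fun p : EuclideanSpace ℝ (Fin 2) => p 0)
      (EuclideanSpace.proj (0 : Fin 2) : EuclideanSpace ℝ (Fin 2) →L[ℝ] ℝ) x :=
    (EuclideanSpace.proj (0 : Fin 2) : EuclideanSpace ℝ (Fin 2) →L[ℝ] ℝ).hasFDerivAt
  have h1 : HasFDerivAt (fun p : EuclideanSpace ℝ (Fin 2) => p 1)
      (EuclideanSpace.proj (1 : Fin 2) : EuclideanSpace ℝ (Fin 2) →L[ℝ] ℝ) x :=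
    (EuclideanSpace.proj (1 : Fin 2) : EuclideanSpace ℝ (Fin 2) →L[ℝ] ℝ).hasFDerivAt
  exact (hf.hasFDerivAt.const_mul s).add ((h0.const_mul a).add (h1.const_mul b))

lemma grad_combo (f : EuclideanSpace ℝ (Fin 2) → ℝ) (x : EuclideanSpace ℝ (Fin 2))
    (hf : DifferentiableAt ℝ f x) (s a b : ℝ) (i : Fin 2) :
    gradient (fun p => s * f p + (a * p 0 + b * p 1)) x i
      = s * gradient f x i + ![a, b] i := by
  have h := hasFDeriv_combo f x hf s a b
  rw [grad_apply, grad_apply, h.fderiv]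
  fin_cases i <;> simp [EuclideanSpace.single_apply]

/-- The 4×4 block matrix `[[s I₂, σ₂ R⊥], [-σ₂ R⊥, s I₂]]`. -/
def Lblock (s σ₂ : ℝ) : Matrix (Fin 4) (Fin 4) ℝ :=
  !![s, 0, 0, σ₂;
     0, s, -σ₂, 0;
     0, -σ₂, s, 0;
     σ₂, 0, 0, s]

/-- If the field is uniform in phase 1 for the potential `V`, then the auxiliary
potentials `V'`, `W'` built from the flux potential `W` solve the conductivity
equation and together with `V` satisfy the attainability condition for the
translation upper bound (Theorem 4.1 of the paper). -/
theorem uniform_field_gives_upper_bound_attainability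
    (Ω P : Set (EuclideanSpace ℝ (Fin 2)))
    (hΩ : IsOpen Ω) (hP : IsOpen P) (hPΩ : P ⊆ Ω)
    (Q : Set (EuclideanSpace ℝ (Fin 2))) (hQ : Q = Ω \ closure P)
    (σ₁ σ₂ : ℝ) (hσ₂ : 0 < σ₂) (hσ : σ₂ < σ₁)
    (σ : EuclideanSpace ℝ (Fin 2) → ℝ)
    (hσP : ∀ x ∈ P, σ x = σ₁) (hσQ : ∀ x ∈ Q, σ x = σ₂)
    (V W : EuclideanSpace ℝ (Fin 2) → ℝ)
    (hVcont : ContinuousOn V Ω) (hWcont : ContinuousOn W Ω)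
    (hVdiff : ∀ x ∈ P ∪ Q, DifferentiableAt ℝ V x)
    (hWdiff : ∀ x ∈ P ∪ Q, DifferentiableAt ℝ W x)
    -- `σ₁ ∇V = σ₂ R⊥ ∇W` on `P`
    (hCRP : ∀ x ∈ P, σ₁ * gradient V x 0 = σ₂ * gradient W x 1 ∧
                     σ₁ * gradient V x 1 = -(σ₂ * gradient W x 0))
    -- `∇V = R⊥ ∇W` on `Q`
    (hCRQ : ∀ x ∈ Q, gradient V x 0 = gradient W x 1 ∧
                     gradient V x 1 = -(gradient W x 0))
    -- the field `-∇V` is uniform, equal to `(e₁, e₂)`, in phase 1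
    (e₁ e₂ : ℝ)
    (hunif : ∀ x ∈ P, gradient V x 0 = -e₁ ∧ gradient V x 1 = -e₂)
    (V' W' : EuclideanSpace ℝ (Fin 2) → ℝ)
    (hV' : ∀ p, V' p = -W p + (σ₁ / σ₂ + 1) * (e₂ * p 0 - e₁ * p 1))
    (hW' : ∀ p, W' p = V p + (σ₁ / σ₂ + 1) * (e₁ * p 0 + e₂ * p 1)) :
    ContinuousOn V' Ω ∧ ContinuousOn W' Ω ∧
    (∀ x ∈ P ∪ Q, DifferentiableAt ℝ V' x) ∧
    (∀ x ∈ P ∪ Q, DifferentiableAt ℝ W' x) ∧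
    (∀ x ∈ P, σ₁ * gradient V' x 0 = σ₂ * gradient W' x 1 ∧
              σ₁ * gradient V' x 1 = -(σ₂ * gradient W' x 0)) ∧
    (∀ x ∈ Q, gradient V' x 0 = gradient W' x 1 ∧
              gradient V' x 1 = -(gradient W' x 0)) ∧
    (∀ x ∈ P ∪ Q,
      (Lblock (σ x) σ₂).mulVec
        ![-(gradient V x 0), -(gradient V x 1), -(gradient V' x 0), -(gradient V' x 1)] =
      (σ₁ + σ₂) • ![e₁, e₂, -e₂, e₁]) := by
  have hσ₂' : σ₂ ≠ 0 := ne_of_gt hσ₂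
  set c : ℝ := σ₁ / σ₂ + 1 with hc
  have hcval : σ₂ * c = σ₁ + σ₂ := by rw [hc]; field_simp
  have hV'eq : V' = fun p => (-1 : ℝ) * W p + ((c * e₂) * p 0 + (-(c * e₁)) * p 1) :=
    funext fun p => by rw [hV']; ring
  have hW'eq : W' = fun p => (1 : ℝ) * V p + ((c * e₁) * p 0 + (c * e₂) * p 1) :=
    funext fun p => by rw [hW']; ring
  have hcont0 : Continuous fun p : EuclideanSpace ℝ (Fin 2) => p 0 :=
    (EuclideanSpace.proj (0 : Fin 2) : EuclideanSpace ℝ (Fin 2) →L[ℝ] ℝ).continuous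
  have hcont1 : Continuous fun p : EuclideanSpace ℝ (Fin 2) => p 1 :=
    (EuclideanSpace.proj (1 : Fin 2) : EuclideanSpace ℝ (Fin 2) →L[ℝ] ℝ).continuous
  have hV'cont : ContinuousOn V' Ω := by
    rw [hV'eq]
    exact (continuousOn_const.mul hWcont).add
      (((continuous_const.mul hcont0).add (continuous_const.mul hcont1)).continuousOn)
  have hW'cont : ContinuousOn W' Ω := by
    rw [hW'eq]
    exact (continuousOn_const.mul hVcont).add
      (((continuous_const.mul hcont0).add (continuous_const.mul hcont1)).continuousOn)
  have hV'diff : ∀ x ∈ P ∪ Q, DifferentiableAt ℝ V' x := fun x hx => by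
    rw [hV'eq]
    exact (hasFDeriv_combo W x (hWdiff x hx) (-1) (c * e₂) (-(c * e₁))).differentiableAt
  have hW'diff : ∀ x ∈ P ∪ Q, DifferentiableAt ℝ W' x := fun x hx => by
    rw [hW'eq]
    exact (hasFDeriv_combo V x (hVdiff x hx) 1 (c * e₁) (c * e₂)).differentiableAt
  have gV'0 : ∀ x ∈ P ∪ Q, gradient V' x 0 = -gradient W x 0 + c * e₂ := fun x hx => by
    rw [hV'eq, grad_combo W x (hWdiff x hx) (-1) (c * e₂) (-(c * e₁)) 0]
    simp; try ring
  have gV'1 : ∀ x ∈ P ∪ Q, gradient V' x 1 = -gradient W x 1 - c * e₁ := fun x hx => by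
    rw [hV'eq, grad_combo W x (hWdiff x hx) (-1) (c * e₂) (-(c * e₁)) 1]
    simp; try ring
  have gW'0 : ∀ x ∈ P ∪ Q, gradient W' x 0 = gradient V x 0 + c * e₁ := fun x hx => by
    rw [hW'eq, grad_combo V x (hVdiff x hx) 1 (c * e₁) (c * e₂) 0]
    simp
  have gW'1 : ∀ x ∈ P ∪ Q, gradient W' x 1 = gradient V x 1 + c * e₂ := fun x hx => by
    rw [hW'eq, grad_combo V x (hVdiff x hx) 1 (c * e₁) (c * e₂) 1]
    simp
  -- values of ∇W on P
  have hWP : ∀ x ∈ P, gradient W x 0 = σ₁ * e₂ / σ₂ ∧ gradient W x 1 = -(σ₁ * e₁) / σ₂ := by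
    intro x hx
    obtain ⟨h1, h2⟩ := hCRP x hx
    obtain ⟨hu1, hu2⟩ := hunif x hx
    rw [hu1] at h1; rw [hu2] at h2
    constructor
    · field_simp; linarith
    · field_simp; linarith
  refine ⟨hV'cont, hW'cont, hV'diff, hW'diff, ?_, ?_, ?_⟩
  · intro x hx
    have hxu : x ∈ P ∪ Q := Or.inl hx
    obtain ⟨hW0, hW1⟩ := hWP x hx
    obtain ⟨hu1, hu2⟩ := hunif x hx
    rw [gV'0 x hxu, gV'1 x hxu, gW'0 x hxu, gW'1 x hxu, hW0, hW1, hu1, hu2, hc]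
    constructor <;> (field_simp; try ring)
  · intro x hx
    have hxu : x ∈ P ∪ Q := Or.inr hx
    obtain ⟨h1, h2⟩ := hCRQ x hx
    rw [gV'0 x hxu, gV'1 x hxu, gW'0 x hxu, gW'1 x hxu, h1, h2]
    constructor <;> ring
  · intro x hx
    rcases hx with hx | hx
    · have hxu : x ∈ P ∪ Q := Or.inl hx
      obtain ⟨hW0, hW1⟩ := hWP x hx
      obtain ⟨hu1, hu2⟩ := hunif x hx
      funext i
      fin_cases i <;>
        simp [Lblock, Matrix.mulVec, dotProduct, Fin.sum_univ_four,
          gV'0 x hxu, gV'1 x hxu, hW0, hW1, hu1, hu2, hσP x hx, hc] <;>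
        (field_simp; try ring)
    · have hxu : x ∈ P ∪ Q := Or.inr hx
      obtain ⟨h1, h2⟩ := hCRQ x hx
      funext i
      fin_cases i <;>
        simp [Lblock, Matrix.mulVec, dotProduct, Fin.sum_univ_four,
          gV'0 x hxu, gV'1 x hxu, h1, h2, hσQ x hx] <;>
        (try (rw [← hcval]; ring))
end
end

section
/- Let ε > 0, let A := {z ∈ ℂ : 1−ε < |z| < 1+ε}, and let F be analytic on A. Suppose: (a) F restricted to the unit circle {|z| = 1} is injective; (b) there exists δ > 0 such that F is injective on B(1,δ) ∩ A and injective on B(−1,δ) ∩ A, where B(a,δ) is the open disc of radius δ centered at a; and (c) F'(z) ≠ 0 for every z with |z| = 1 and z ≠ ±1. Then there exists ε₀ with 0 < ε₀ ≤ ε such that F is injective on the annulus {z ∈ ℂ : 1−ε₀ < |z| < 1+ε₀}. -/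
open Complex Metric

noncomputable section

open Filter Topology

/-- The open annulus of width `2r` around the unit circle is open. -/
lemma annulus_isOpen (r : ℝ) :
    IsOpen {z : ℂ | 1 - r < ‖z‖ ∧ ‖z‖ < 1 + r} := by
  have : {z : ℂ | 1 - r < ‖z‖ ∧ ‖z‖ < 1 + r}
      = (fun z : ℂ => ‖z‖) ⁻¹' (Set.Ioo (1 - r) (1 + r)) := rfl
  rw [this]
  exact (isOpen_Ioo).preimage continuous_norm

/-- Local injectivity from a nonzero strict derivative. -/
lemma local_inj_of_hasStrictDerivAt {f : ℂ → ℂ} {a c : ℂ}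
    (hf : HasStrictDerivAt f c a) (hc : c ≠ 0) :
    ∃ U ∈ 𝓝 a, Set.InjOn f U := by
  have h := (hf.hasStrictFDerivAt_equiv hc).eventually_left_inverse
  obtain ⟨U, hU, hUg⟩ := h.exists_mem
  refine ⟨U, hU, fun x hx y hy hxy => ?_⟩
  have h1 := hUg x hx
  have h2 := hUg y hy
  rw [hxy] at h1
  rw [h1] at h2
  exact h2

/-- Key step of the univalence lemma (Lemma 8.1 of the paper): an analytic function on an
annulus around the unit circle which is injective on the circle, injective near `±1`, and has
nonvanishing derivative elsewhere on the circle, is injective on a thinner annulus. -/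
theorem injective_on_thinner_annulus
    (ε : ℝ) (hε : 0 < ε)
    (F : ℂ → ℂ)
    (hF : DifferentiableOn ℂ F {z : ℂ | 1 - ε < ‖z‖ ∧ ‖z‖ < 1 + ε})
    (hcirc : Set.InjOn F {z : ℂ | ‖z‖ = 1})
    (hδ : ∃ δ > 0,
        Set.InjOn F (ball (1 : ℂ) δ ∩
          {z : ℂ | 1 - ε < ‖z‖ ∧ ‖z‖ < 1 + ε}) ∧
        Set.InjOn F (ball (-1 : ℂ) δ ∩
          {z : ℂ | 1 - ε < ‖z‖ ∧ ‖z‖ < 1 + ε}))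
    (hderiv : ∀ z : ℂ, ‖z‖ = 1 → z ≠ 1 → z ≠ -1 → deriv F z ≠ 0) :
    ∃ ε₀ : ℝ, 0 < ε₀ ∧ ε₀ ≤ ε ∧
      Set.InjOn F {z : ℂ | 1 - ε₀ < ‖z‖ ∧ ‖z‖ < 1 + ε₀} := by
  obtain ⟨δ, hδ0, hδ1, hδ2⟩ := hδ
  set A : ℝ → Set ℂ := fun r => {z : ℂ | 1 - r < ‖z‖ ∧ ‖z‖ < 1 + r} with hA
  by_contra hcon
  push_neg at hcon
  -- for each n, get a non-injectivity pair in the annulus of width `min ε (1/(n+1))`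
  have key : ∀ n : ℕ, ∃ p : ℂ × ℂ, p.1 ∈ A (min ε (1 / (n + 1))) ∧
      p.2 ∈ A (min ε (1 / (n + 1))) ∧ F p.1 = F p.2 ∧ p.1 ≠ p.2 := by
    intro n
    have h1 : (0 : ℝ) < min ε (1 / (n + 1)) := by positivity
    have h2 : min ε (1 / (n + 1)) ≤ ε := min_le_left _ _
    have := hcon (min ε (1 / (n + 1))) h1 h2
    simp only [Set.InjOn] at this
    push_neg at this
    obtain ⟨x, hx, y, hy, hxy, hne⟩ := this
    exact ⟨(x, y), hx, hy, hxy, hne⟩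
  choose p hp1 hp2 hp3 hp4 using key
  set z : ℕ → ℂ := fun n => (p n).1
  set w : ℕ → ℂ := fun n => (p n).2
  -- both sequences live in the compact closed ball of radius 1 + ε
  have hmem : ∀ n, z n ∈ A ε ∧ w n ∈ A ε := by
    intro n
    have h2 : min ε (1 / (n + 1)) ≤ ε := min_le_left _ _
    have hz := hp1 n; have hw := hp2 n
    constructor
    · exact ⟨lt_of_le_of_lt (by linarith) hz.1, lt_of_lt_of_le hz.2 (by linarith)⟩
    · exact ⟨lt_of_le_of_lt (by linarith) hw.1, lt_of_lt_of_le hw.2 (by linarith)⟩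
  have hcompact : IsCompact (closedBall (0 : ℂ) (1 + ε)) := isCompact_closedBall _ _
  have hzball : ∀ n, z n ∈ closedBall (0 : ℂ) (1 + ε) := by
    intro n
    simp only [mem_closedBall, dist_zero_right]
    exact le_of_lt (hmem n).1.2
  have hwball : ∀ n, w n ∈ closedBall (0 : ℂ) (1 + ε) := by
    intro n
    simp only [mem_closedBall, dist_zero_right]
    exact le_of_lt (hmem n).2.2
  obtain ⟨a, _, φ, hφ, hza⟩ := hcompact.tendsto_subseq hzball
  obtain ⟨b, _, ψ, hψ, hwb⟩ := hcompact.tendsto_subseq (fun n => hwball (φ n))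
  set σ : ℕ → ℕ := φ ∘ ψ with hσ
  have hσmono : StrictMono σ := hφ.comp hψ
  have hσle : ∀ n, n ≤ σ n := fun n => hσmono.le_apply
  have hzσ : Tendsto (fun n => z (σ n)) atTop (𝓝 a) := hza.comp hψ.tendsto_atTop
  have hwσ : Tendsto (fun n => w (σ n)) atTop (𝓝 b) := hwb
  -- the moduli tend to 1
  have habs : ∀ (u : ℕ → ℂ), (∀ n : ℕ, u n ∈ A (min ε (1 / (n + 1)))) →
      ∀ (c : ℂ), Tendsto (fun n => u (σ n)) atTop (𝓝 c) → ‖c‖ = 1 := by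
    intro u hu c hc
    have h1 : Tendsto (fun n => ‖u (σ n)‖) atTop (𝓝 (‖c‖)) :=
      hc.norm
    have h2 : Tendsto (fun n => ‖u (σ n)‖) atTop (𝓝 1) := by
      have hlo : Tendsto (fun n : ℕ => 1 - 1 / ((n : ℝ) + 1)) atTop (𝓝 1) := by
        have := tendsto_one_div_add_atTop_nhds_zero_nat (𝕜 := ℝ)
        have h := this.const_sub 1
        simpa using h
      have hhi : Tendsto (fun n : ℕ => 1 + 1 / ((n : ℝ) + 1)) atTop (𝓝 1) := by
        have := tendsto_one_div_add_atTop_nhds_zero_nat (𝕜 := ℝ)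
        have h := this.const_add 1
        simpa using h
      refine tendsto_of_tendsto_of_tendsto_of_le_of_le hlo hhi ?_ ?_
      · intro n
        have h := (hu (σ n)).1
        have hle : min ε (1 / ((σ n : ℝ) + 1)) ≤ 1 / ((n : ℝ) + 1) := by
          refine le_trans (min_le_right _ _) ?_
          apply one_div_le_one_div_of_le (by positivity)
          have hle' : (n : ℝ) ≤ (σ n : ℝ) := Nat.cast_le.mpr (hσle n)
          linarith
        linarith
      · intro n
        have h := (hu (σ n)).2
        have hle : min ε (1 / ((σ n : ℝ) + 1)) ≤ 1 / ((n : ℝ) + 1) := by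
          refine le_trans (min_le_right _ _) ?_
          apply one_div_le_one_div_of_le (by positivity)
          have hle' : (n : ℝ) ≤ (σ n : ℝ) := Nat.cast_le.mpr (hσle n)
          linarith
        linarith
    exact tendsto_nhds_unique h1 h2
  have habsa : ‖a‖ = 1 := habs z hp1 a hzσ
  have habsb : ‖b‖ = 1 := habs w hp2 b hwσ
  -- a and b are in the open annulus A ε
  have hAopen : IsOpen (A ε) := annulus_isOpen ε
  have haA : a ∈ A ε := by constructor <;> rw [habsa] <;> linarith
  have hbA : b ∈ A ε := by constructor <;> rw [habsb] <;> linarith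
  -- F a = F b
  have hFa : Tendsto (fun n => F (z (σ n))) atTop (𝓝 (F a)) :=
    ((hF.continuousOn.continuousAt (hAopen.mem_nhds haA)).tendsto).comp hzσ
  have hFb : Tendsto (fun n => F (w (σ n))) atTop (𝓝 (F b)) :=
    ((hF.continuousOn.continuousAt (hAopen.mem_nhds hbA)).tendsto).comp hwσ
  have hFab : F a = F b := by
    have : (fun n => F (z (σ n))) = fun n => F (w (σ n)) := funext fun n => hp3 (σ n)
    rw [this] at hFa
    exact tendsto_nhds_unique hFa hFb
  have hab : a = b := hcirc habsa habsb hFab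
  subst hab
  -- get a neighborhood of a on which F is injective (intersected with A ε)
  have hUinj : ∃ U ∈ 𝓝 a, Set.InjOn F (U ∩ A ε) := by
    by_cases ha1 : a = 1
    · subst ha1
      exact ⟨ball (1 : ℂ) δ, ball_mem_nhds _ hδ0, hδ1⟩
    · by_cases ha2 : a = -1
      · exact ⟨ball (-1 : ℂ) δ, by subst ha2; exact ball_mem_nhds _ hδ0, by subst ha2; exact hδ2⟩
      · have hd : deriv F a ≠ 0 := hderiv a habsa ha1 ha2
        have han : AnalyticAt ℂ F a := hF.analyticAt (hAopen.mem_nhds haA)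
        have hsd : HasStrictDerivAt F (deriv F a) a := by
          have := han.hasStrictFDerivAt.hasStrictDerivAt
          rwa [fderiv_apply_one_eq_deriv] at this
        obtain ⟨U, hU, hUinj⟩ := local_inj_of_hasStrictDerivAt hsd hd
        exact ⟨U, hU, hUinj.mono Set.inter_subset_left⟩
  obtain ⟨U, hU, hUinj⟩ := hUinj
  -- eventually z (σ n) and w (σ n) are both in U ∩ A ε
  have hev1 : ∀ᶠ n in atTop, z (σ n) ∈ U := hzσ hU
  have hev2 : ∀ᶠ n in atTop, w (σ n) ∈ U := hwσ hU
  obtain ⟨n, hn1, hn2⟩ := (hev1.and hev2).exists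
  have : z (σ n) = w (σ n) :=
    hUinj ⟨hn1, (hmem (σ n)).1⟩ ⟨hn2, (hmem (σ n)).2⟩ (hp3 (σ n))
  exact hp4 (σ n) this
end
end

section
/- Let e₁, e₂ ∈ L²(Ω;ℝ²) with ⟨e₁⟩ = (1,0)ᵀ and ⟨e₂⟩ = (0,1)ᵀ. Let A be the symmetric 2×2 matrix with entries a_{ij} = ⟨σ eᵢ·eⱼ⟩ and b' = ⟨e₁·R⊥e₂⟩. Then det A ≥ σ₂²b'², and Tr A − 2b'σ₂ ≤ (f₂/σ₂ + 2f₁/(σ₁+σ₂))·(det A − b'²σ₂²). In particular, if det A > σ₂²b'², then f₁ ≤ (σ₂(σ₁+σ₂)/(σ₁−σ₂))·[1/σ₂ − (Tr A − 2b'σ₂)/(det A − b'²σ₂²)]. -/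
open MeasureTheory Matrix

noncomputable section

/-- The 90°-rotation matrix `R⊥` with rows `(0,1)` and `(-1,0)`. -/
def Rperp : Matrix (Fin 2) (Fin 2) ℝ := !![0, 1; -1, 0]

private lemma quad_det_aux (b11 b12 b22 c : ℝ)
    (hpsd : ∀ x y : ℝ, 0 ≤ b11*x^2 + 2*b12*x*y + b22*y^2)
    (h : ∀ p q r s : ℝ,
      (p*s - q*r)^2 * c^2 ≤ (b11*p^2+2*b12*p*q+b22*q^2)*(b11*r^2+2*b12*r*s+b22*s^2)) :
    c^2 ≤ b11*b22 - b12^2 := by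
  have hb11 : 0 ≤ b11 := by have := hpsd 1 0; nlinarith [this]
  rcases hb11.lt_or_eq with hpos | h0
  · have h1 := h 1 0 (-(b12/b11)) 1
    have hb : b11 ≠ 0 := ne_of_gt hpos
    have key2 : (1*1 - 0*(-(b12/b11)))^2 * c^2 = c^2 := by ring
    have keyR : (b11*1^2+2*b12*1*0+b22*0^2) * (b11*(-(b12/b11))^2+2*b12*(-(b12/b11))*1+b22*1^2)
        = b11*b22 - b12^2 := by field_simp; ring
    rw [key2, keyR] at h1
    exact h1
  · have hb12 : b12 = 0 := by
      by_contra hb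
      have h1 := hpsd (-(b22+1)/(2*b12)) 1
      rw [← h0] at h1
      have he : (0:ℝ)*(-(b22+1)/(2*b12))^2 + 2*b12*(-(b22+1)/(2*b12))*1 + b22*1^2 = -1 := by
        field_simp
        ring
      rw [he] at h1
      linarith
    have h1 := h 1 0 0 1
    rw [← h0, hb12] at h1
    have hb12sq : b12^2 = 0 := by rw [hb12]; ring
    have hb1122 : b11*b22 = 0 := by rw [← h0]; ring
    nlinarith [h1, sq_nonneg c]

set_option maxHeartbeats 1000000 in
private lemma pointQ (σ₁ σ₂ χ t α0 α1 ξ0 ξ1 η0 η1 E0 E1 F0 F1 : ℝ)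
    (h2 : 0 < σ₂) (h12 : σ₂ < σ₁) (hχ : χ = 0 ∨ χ = 1) :
    (2*α0*ξ0 + 2*t*α1*η0)*E0 + (2*α1*ξ0 - 2*t*α0*η0)*E1
      + (2*α0*ξ1 + 2*t*α1*η1)*F0 + (2*α1*ξ1 - 2*t*α0*η1)*F1
      + (-((α0^2+α1^2)*(2/(σ₁+σ₂) - 1/σ₂)))*χ + (-((α0^2+α1^2)*(1/σ₂)))
    ≤ (ξ0^2+t^2*η0^2)*((σ₁*χ+σ₂*(1-χ))*(E0*E0+E1*E1))
      + (2*(ξ0*ξ1+t^2*η0*η1))*((σ₁*χ+σ₂*(1-χ))*(E0*F0+E1*F1))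
      + (ξ1^2+t^2*η1^2)*((σ₁*χ+σ₂*(1-χ))*(F0*F0+F1*F1))
      + (-(2*t*σ₂*(ξ0*η1-ξ1*η0)))*(E0*F1 - E1*F0) := by
  have hs : (0:ℝ) < σ₁ + σ₂ := by linarith
  rcases hχ with h|h <;> subst h
  · -- χ = 0 : σ = σ₂
    have hL : (2*α0*ξ0 + 2*t*α1*η0)*E0 + (2*α1*ξ0 - 2*t*α0*η0)*E1
      + (2*α0*ξ1 + 2*t*α1*η1)*F0 + (2*α1*ξ1 - 2*t*α0*η1)*F1
      + (-((α0^2+α1^2)*(2/(σ₁+σ₂) - 1/σ₂)))*(0:ℝ) + (-((α0^2+α1^2)*(1/σ₂)))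
        = ((2*α0*ξ0 + 2*t*α1*η0)*E0 + (2*α1*ξ0 - 2*t*α0*η0)*E1
      + (2*α0*ξ1 + 2*t*α1*η1)*F0 + (2*α1*ξ1 - 2*t*α0*η1)*F1)
        - (α0^2+α1^2)/σ₂ := by ring
    have hR : (ξ0^2+t^2*η0^2)*((σ₁*0+σ₂*(1-0))*(E0*E0+E1*E1))
      + (2*(ξ0*ξ1+t^2*η0*η1))*((σ₁*0+σ₂*(1-0))*(E0*F0+E1*F1))
      + (ξ1^2+t^2*η1^2)*((σ₁*0+σ₂*(1-0))*(F0*F0+F1*F1))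
      + (-(2*t*σ₂*(ξ0*η1-ξ1*η0)))*(E0*F1 - E1*F0)
      = σ₂*((ξ0*E0+ξ1*F0 - t*(η0*E1+η1*F1))^2 + (ξ0*E1+ξ1*F1 + t*(η0*E0+η1*F0))^2) := by
      ring
    rw [hL, hR, sub_le_iff_le_add, ← sub_le_iff_le_add', le_div_iff₀ h2]
    linarith [sq_nonneg (σ₂*(ξ0*E0+ξ1*F0 - t*(η0*E1+η1*F1)) - α0),
      sq_nonneg (σ₂*(ξ0*E1+ξ1*F1 + t*(η0*E0+η1*F0)) - α1)]
  · -- χ = 1 : σ = σ₁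
    have hL : (2*α0*ξ0 + 2*t*α1*η0)*E0 + (2*α1*ξ0 - 2*t*α0*η0)*E1
      + (2*α0*ξ1 + 2*t*α1*η1)*F0 + (2*α1*ξ1 - 2*t*α0*η1)*F1
      + (-((α0^2+α1^2)*(2/(σ₁+σ₂) - 1/σ₂)))*(1:ℝ) + (-((α0^2+α1^2)*(1/σ₂)))
        = ((2*α0*ξ0 + 2*t*α1*η0)*E0 + (2*α1*ξ0 - 2*t*α0*η0)*E1
      + (2*α0*ξ1 + 2*t*α1*η1)*F0 + (2*α1*ξ1 - 2*t*α0*η1)*F1)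
        - (2*(α0^2+α1^2))/(σ₁+σ₂) := by ring
    have hR : (ξ0^2+t^2*η0^2)*((σ₁*1+σ₂*(1-1))*(E0*E0+E1*E1))
      + (2*(ξ0*ξ1+t^2*η0*η1))*((σ₁*1+σ₂*(1-1))*(E0*F0+E1*F1))
      + (ξ1^2+t^2*η1^2)*((σ₁*1+σ₂*(1-1))*(F0*F0+F1*F1))
      + (-(2*t*σ₂*(ξ0*η1-ξ1*η0)))*(E0*F1 - E1*F0)
      = ((σ₁+σ₂)/2)*((ξ0*E0+ξ1*F0 - t*(η0*E1+η1*F1))^2 + (ξ0*E1+ξ1*F1 + t*(η0*E0+η1*F0))^2)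
        + ((σ₁-σ₂)/2)*((ξ0*E0+ξ1*F0 + t*(η0*E1+η1*F1))^2 + (ξ0*E1+ξ1*F1 - t*(η0*E0+η1*F0))^2) := by
      ring
    rw [hL, hR, sub_le_iff_le_add, ← sub_le_iff_le_add', le_div_iff₀ hs]
    linarith [sq_nonneg ((σ₁+σ₂)*(ξ0*E0+ξ1*F0 - t*(η0*E1+η1*F1)) - 2*α0),
      sq_nonneg ((σ₁+σ₂)*(ξ0*E1+ξ1*F1 + t*(η0*E0+η1*F0)) - 2*α1),
      mul_nonneg (mul_nonneg hs.le (by linarith : (0:ℝ) ≤ σ₁ - σ₂))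
        (sq_nonneg (ξ0*E0+ξ1*F0 + t*(η0*E1+η1*F1))),
      mul_nonneg (mul_nonneg hs.le (by linarith : (0:ℝ) ≤ σ₁ - σ₂))
        (sq_nonneg (ξ0*E1+ξ1*F1 - t*(η0*E0+η1*F0)))]

set_option maxHeartbeats 1000000 in
/-- Dual translation bound, yielding the upper bound on the volume fraction for
normalized electric fields (inequalities (2.52) and (2.58) of the paper). -/
theorem volume_fraction_upper_bound_normalized
    (Ω : Set (Fin 2 → ℝ)) (hΩmeas : MeasurableSet Ω)
    (hΩbdd : Bornology.IsBounded Ω) (hΩpos : 0 < (volume Ω).toReal)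
    (χ₁ : (Fin 2 → ℝ) → ℝ) (hχmeas : Measurable χ₁)
    (hχ01 : ∀ x, χ₁ x = 0 ∨ χ₁ x = 1)
    (σ₁ σ₂ : ℝ) (hσ₂ : 0 < σ₂) (hσ : σ₂ < σ₁)
    (σ : (Fin 2 → ℝ) → ℝ)
    (hσdef : ∀ x, σ x = σ₁ * χ₁ x + σ₂ * (1 - χ₁ x))
    (f₁ f₂ : ℝ) (hf₁ : f₁ = avg Ω χ₁) (hf₂ : f₂ = 1 - f₁)
    (e₁ e₂ : (Fin 2 → ℝ) → (Fin 2 → ℝ))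
    (he₁ : MemLp e₁ 2 (volume.restrict Ω))
    (he₂ : MemLp e₂ 2 (volume.restrict Ω))
    -- normalization `⟨e₁⟩ = (1,0)ᵀ`, `⟨e₂⟩ = (0,1)ᵀ`
    (he₁avg : avg Ω (fun x => e₁ x 0) = 1 ∧ avg Ω (fun x => e₁ x 1) = 0)
    (he₂avg : avg Ω (fun x => e₂ x 0) = 0 ∧ avg Ω (fun x => e₂ x 1) = 1)
    (A : Matrix (Fin 2) (Fin 2) ℝ)
    (hA11 : A 0 0 = avg Ω (fun x => σ x * (e₁ x ⬝ᵥ e₁ x)))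
    (hA12 : A 0 1 = avg Ω (fun x => σ x * (e₁ x ⬝ᵥ e₂ x)))
    (hA21 : A 1 0 = avg Ω (fun x => σ x * (e₂ x ⬝ᵥ e₁ x)))
    (hA22 : A 1 1 = avg Ω (fun x => σ x * (e₂ x ⬝ᵥ e₂ x)))
    (b' : ℝ) (hb' : b' = avg Ω (fun x => e₁ x ⬝ᵥ Rperp.mulVec (e₂ x))) :
    σ₂ ^ 2 * b' ^ 2 ≤ A.det ∧
    A.trace - 2 * b' * σ₂ ≤
      (f₂ / σ₂ + 2 * f₁ / (σ₁ + σ₂)) * (A.det - b' ^ 2 * σ₂ ^ 2) ∧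
    (σ₂ ^ 2 * b' ^ 2 < A.det →
      f₁ ≤ σ₂ * (σ₁ + σ₂) / (σ₁ - σ₂) *
        (1 / σ₂ - (A.trace - 2 * b' * σ₂) / (A.det - b' ^ 2 * σ₂ ^ 2))) := by
  have hV : 0 < (volume Ω).toReal := hΩpos
  have hVne : (volume Ω).toReal ≠ 0 := ne_of_gt hV
  haveI hfin : IsFiniteMeasure (volume.restrict Ω) :=
    ⟨by rw [Measure.restrict_apply_univ]; exact hΩbdd.measure_lt_top⟩
  have hsum : (0:ℝ) < σ₁ + σ₂ := by linarith
  -- components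
  have hc1 : ∀ i : Fin 2, MemLp (fun x => e₁ x i) 2 (volume.restrict Ω) := fun i => by
    simpa only [Function.comp_def, ContinuousLinearMap.proj_apply] using
      (ContinuousLinearMap.proj (R := ℝ) (φ := fun _ : Fin 2 => ℝ) i).comp_memLp' he₁
  have hc2 : ∀ i : Fin 2, MemLp (fun x => e₂ x i) 2 (volume.restrict Ω) := fun i => by
    simpa only [Function.comp_def, ContinuousLinearMap.proj_apply] using
      (ContinuousLinearMap.proj (R := ℝ) (φ := fun _ : Fin 2 => ℝ) i).comp_memLp' he₂
  -- products of L² functions are integrable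
  have hmul : ∀ f g : (Fin 2 → ℝ) → ℝ, MemLp f 2 (volume.restrict Ω) →
      MemLp g 2 (volume.restrict Ω) →
      Integrable (fun x => f x * g x) (volume.restrict Ω) := by
    intro f g hf hg
    refine (hf.integrable_sq.add hg.integrable_sq).mono'
      (hf.aestronglyMeasurable.mul hg.aestronglyMeasurable) ?_
    filter_upwards with x
    simp only [Pi.add_apply]
    rw [Real.norm_eq_abs, abs_mul]
    nlinarith [sq_nonneg (|f x| - |g x|), sq_abs (f x), sq_abs (g x),
      abs_nonneg (f x), abs_nonneg (g x)]
  -- σ is a.e. strongly measurable and bounded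
  have hσmeas : AEStronglyMeasurable σ (volume.restrict Ω) := by
    have hfun : σ = fun x => σ₁ * χ₁ x + σ₂ * (1 - χ₁ x) := funext hσdef
    rw [hfun]
    exact ((hχmeas.const_mul σ₁).add
      ((measurable_const.sub hχmeas).const_mul σ₂)).aestronglyMeasurable
  have hσval : ∀ x, σ x = σ₁ ∨ σ x = σ₂ := by
    intro x
    rcases hχ01 x with h | h
    · right; rw [hσdef x, h]; ring
    · left; rw [hσdef x, h]; ring
  have hσbd : ∃ C, ∀ x, ‖σ x‖ ≤ C := by
    refine ⟨σ₁, fun x => ?_⟩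
    rcases hσval x with h | h <;> rw [h, Real.norm_eq_abs, abs_of_pos (by linarith)] <;> linarith
  -- integrability of all integrands
  have hfun11 : (fun x => e₁ x ⬝ᵥ e₁ x) = fun x => e₁ x 0 * e₁ x 0 + e₁ x 1 * e₁ x 1 := by
    funext x; simp [dotProduct, Fin.sum_univ_two]
  have hfun12 : (fun x => e₁ x ⬝ᵥ e₂ x) = fun x => e₁ x 0 * e₂ x 0 + e₁ x 1 * e₂ x 1 := by
    funext x; simp [dotProduct, Fin.sum_univ_two]
  have hfun22 : (fun x => e₂ x ⬝ᵥ e₂ x) = fun x => e₂ x 0 * e₂ x 0 + e₂ x 1 * e₂ x 1 := by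
    funext x; simp [dotProduct, Fin.sum_univ_two]
  have hfunR : (fun x => e₁ x ⬝ᵥ Rperp.mulVec (e₂ x))
      = fun x => e₁ x 0 * e₂ x 1 - e₁ x 1 * e₂ x 0 := by
    funext x
    simp [Rperp, dotProduct, Matrix.mulVec, Fin.sum_univ_two]
    ring
  have hi11 : Integrable (fun x => e₁ x ⬝ᵥ e₁ x) (volume.restrict Ω) := by
    rw [hfun11]; exact (hmul _ _ (hc1 0) (hc1 0)).add (hmul _ _ (hc1 1) (hc1 1))
  have hi12 : Integrable (fun x => e₁ x ⬝ᵥ e₂ x) (volume.restrict Ω) := by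
    rw [hfun12]; exact (hmul _ _ (hc1 0) (hc2 0)).add (hmul _ _ (hc1 1) (hc2 1))
  have hi22 : Integrable (fun x => e₂ x ⬝ᵥ e₂ x) (volume.restrict Ω) := by
    rw [hfun22]; exact (hmul _ _ (hc2 0) (hc2 0)).add (hmul _ _ (hc2 1) (hc2 1))
  have hiR : Integrable (fun x => e₁ x ⬝ᵥ Rperp.mulVec (e₂ x)) (volume.restrict Ω) := by
    rw [hfunR]; exact (hmul _ _ (hc1 0) (hc2 1)).sub (hmul _ _ (hc1 1) (hc2 0))
  have hs11 : Integrable (fun x => σ x * (e₁ x ⬝ᵥ e₁ x)) (volume.restrict Ω) :=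
    hi11.bdd_mul hσmeas (ae_of_all _ hσbd.choose_spec)
  have hs12 : Integrable (fun x => σ x * (e₁ x ⬝ᵥ e₂ x)) (volume.restrict Ω) :=
    hi12.bdd_mul hσmeas (ae_of_all _ hσbd.choose_spec)
  have hs22 : Integrable (fun x => σ x * (e₂ x ⬝ᵥ e₂ x)) (volume.restrict Ω) :=
    hi22.bdd_mul hσmeas (ae_of_all _ hσbd.choose_spec)
  have hiE : ∀ i, Integrable (fun x => e₁ x i) (volume.restrict Ω) := fun i =>
    (hc1 i).integrable one_le_two
  have hiF : ∀ i, Integrable (fun x => e₂ x i) (volume.restrict Ω) := fun i =>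
    (hc2 i).integrable one_le_two
  have hiχ : Integrable χ₁ (volume.restrict Ω) := by
    refine (integrable_const (1:ℝ)).mono' hχmeas.aestronglyMeasurable ?_
    filter_upwards with x
    rcases hχ01 x with h | h <;> simp [h]
  -- base integral values
  have hbase : ∀ (h : (Fin 2 → ℝ) → ℝ) (cst : ℝ), cst = avg Ω h →
      (∫ x in Ω, h x) = (volume Ω).toReal * cst := by
    intro h cst hcst
    rw [hcst]
    unfold avg
    rw [← mul_assoc, mul_inv_cancel₀ hVne, one_mul]
  have hIS11 := hbase _ _ hA11
  have hIS12 := hbase _ _ hA12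
  have hIS22 := hbase _ _ hA22
  have hIRB := hbase _ _ hb'
  have hIE0 := hbase _ _ he₁avg.1.symm
  have hIE1 := hbase _ _ he₁avg.2.symm
  have hIF0 := hbase _ _ he₂avg.1.symm
  have hIF1 := hbase _ _ he₂avg.2.symm
  have hIχ := hbase _ _ hf₁
  have hA_symm : A 0 1 = A 1 0 := by
    rw [hA12, hA21]
    have : (fun x => σ x * (e₁ x ⬝ᵥ e₂ x)) = fun x => σ x * (e₂ x ⬝ᵥ e₁ x) := by
      funext x; rw [dotProduct_comm]
    rw [this]
  -- the master averaged inequality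
  have master : ∀ ξ0 ξ1 η0 η1 t α0 α1 : ℝ,
      2*(α0*ξ0 + α1*ξ1) + 2*t*(α1*η0 - α0*η1)
        - (α0^2+α1^2)*((1-f₁)/σ₂ + 2*f₁/(σ₁+σ₂))
      ≤ (A 0 0*ξ0^2 + 2*(A 0 1)*ξ0*ξ1 + A 1 1*ξ1^2)
        + t^2*(A 0 0*η0^2 + 2*(A 0 1)*η0*η1 + A 1 1*η1^2)
        - 2*t*σ₂*(ξ0*η1 - ξ1*η0)*b' := by
    intro ξ0 ξ1 η0 η1 t α0 α1
    have i1 : Integrable (fun x => (2*α0*ξ0 + 2*t*α1*η0)*(e₁ x 0)) (volume.restrict Ω) :=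
      (hiE 0).const_mul _
    have i2 : Integrable (fun x => (2*α1*ξ0 - 2*t*α0*η0)*(e₁ x 1)) (volume.restrict Ω) :=
      (hiE 1).const_mul _
    have i3 : Integrable (fun x => (2*α0*ξ1 + 2*t*α1*η1)*(e₂ x 0)) (volume.restrict Ω) :=
      (hiF 0).const_mul _
    have i4 : Integrable (fun x => (2*α1*ξ1 - 2*t*α0*η1)*(e₂ x 1)) (volume.restrict Ω) :=
      (hiF 1).const_mul _
    have i5 : Integrable (fun x => (-((α0^2+α1^2)*(2/(σ₁+σ₂) - 1/σ₂)))*(χ₁ x))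
        (volume.restrict Ω) := hiχ.const_mul _
    have j1 : Integrable (fun x => (ξ0^2+t^2*η0^2)*(σ x * (e₁ x ⬝ᵥ e₁ x)))
        (volume.restrict Ω) := hs11.const_mul _
    have j2 : Integrable (fun x => (2*(ξ0*ξ1+t^2*η0*η1))*(σ x * (e₁ x ⬝ᵥ e₂ x)))
        (volume.restrict Ω) := hs12.const_mul _
    have j3 : Integrable (fun x => (ξ1^2+t^2*η1^2)*(σ x * (e₂ x ⬝ᵥ e₂ x)))
        (volume.restrict Ω) := hs22.const_mul _
    have j4 : Integrable (fun x => (-(2*t*σ₂*(ξ0*η1-ξ1*η0)))*(e₁ x ⬝ᵥ Rperp.mulVec (e₂ x)))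
        (volume.restrict Ω) := hiR.const_mul _
    have hpt : ∀ x ∈ Ω,
        (2*α0*ξ0 + 2*t*α1*η0)*(e₁ x 0) + (2*α1*ξ0 - 2*t*α0*η0)*(e₁ x 1)
          + (2*α0*ξ1 + 2*t*α1*η1)*(e₂ x 0) + (2*α1*ξ1 - 2*t*α0*η1)*(e₂ x 1)
          + (-((α0^2+α1^2)*(2/(σ₁+σ₂) - 1/σ₂)))*(χ₁ x) + (-((α0^2+α1^2)*(1/σ₂)))
        ≤ (ξ0^2+t^2*η0^2)*(σ x * (e₁ x ⬝ᵥ e₁ x))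
          + (2*(ξ0*ξ1+t^2*η0*η1))*(σ x * (e₁ x ⬝ᵥ e₂ x))
          + (ξ1^2+t^2*η1^2)*(σ x * (e₂ x ⬝ᵥ e₂ x))
          + (-(2*t*σ₂*(ξ0*η1-ξ1*η0)))*(e₁ x ⬝ᵥ Rperp.mulVec (e₂ x)) := by
      intro x _
      have hd1 : e₁ x ⬝ᵥ e₁ x = e₁ x 0 * e₁ x 0 + e₁ x 1 * e₁ x 1 := by
        simp [dotProduct, Fin.sum_univ_two]
      have hd2 : e₁ x ⬝ᵥ e₂ x = e₁ x 0 * e₂ x 0 + e₁ x 1 * e₂ x 1 := by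
        simp [dotProduct, Fin.sum_univ_two]
      have hd3 : e₂ x ⬝ᵥ e₂ x = e₂ x 0 * e₂ x 0 + e₂ x 1 * e₂ x 1 := by
        simp [dotProduct, Fin.sum_univ_two]
      have hd4 : e₁ x ⬝ᵥ Rperp.mulVec (e₂ x) = e₁ x 0 * e₂ x 1 - e₁ x 1 * e₂ x 0 := by
        simp [Rperp, dotProduct, Matrix.mulVec, Fin.sum_univ_two]
        ring
      rw [hd1, hd2, hd3, hd4, hσdef x]
      exact pointQ σ₁ σ₂ (χ₁ x) t α0 α1 ξ0 ξ1 η0 η1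
        (e₁ x 0) (e₁ x 1) (e₂ x 0) (e₂ x 1) hσ₂ hσ (hχ01 x)
    have i12 : Integrable (fun x => (2*α0*ξ0 + 2*t*α1*η0)*(e₁ x 0) + (2*α1*ξ0 - 2*t*α0*η0)*(e₁ x 1)) (volume.restrict Ω) := i1.add i2
    have i123 : Integrable (fun x => (2*α0*ξ0 + 2*t*α1*η0)*(e₁ x 0) + (2*α1*ξ0 - 2*t*α0*η0)*(e₁ x 1) + (2*α0*ξ1 + 2*t*α1*η1)*(e₂ x 0)) (volume.restrict Ω) := i12.add i3
    have i1234 : Integrable (fun x => (2*α0*ξ0 + 2*t*α1*η0)*(e₁ x 0) + (2*α1*ξ0 - 2*t*α0*η0)*(e₁ x 1) + (2*α0*ξ1 + 2*t*α1*η1)*(e₂ x 0) + (2*α1*ξ1 - 2*t*α0*η1)*(e₂ x 1)) (volume.restrict Ω) := i123.add i4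
    have i12345 : Integrable (fun x => (2*α0*ξ0 + 2*t*α1*η0)*(e₁ x 0) + (2*α1*ξ0 - 2*t*α0*η0)*(e₁ x 1) + (2*α0*ξ1 + 2*t*α1*η1)*(e₂ x 0) + (2*α1*ξ1 - 2*t*α0*η1)*(e₂ x 1) + (-((α0^2+α1^2)*(2/(σ₁+σ₂) - 1/σ₂)))*(χ₁ x)) (volume.restrict Ω) := i1234.add i5
    have i123456 : Integrable (fun x => (2*α0*ξ0 + 2*t*α1*η0)*(e₁ x 0) + (2*α1*ξ0 - 2*t*α0*η0)*(e₁ x 1) + (2*α0*ξ1 + 2*t*α1*η1)*(e₂ x 0) + (2*α1*ξ1 - 2*t*α0*η1)*(e₂ x 1) + (-((α0^2+α1^2)*(2/(σ₁+σ₂) - 1/σ₂)))*(χ₁ x) + (-((α0^2+α1^2)*(1/σ₂)))) (volume.restrict Ω) :=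
      i12345.add (integrable_const _)
    have j12 : Integrable (fun x => (ξ0^2+t^2*η0^2)*(σ x * (e₁ x ⬝ᵥ e₁ x)) + (2*(ξ0*ξ1+t^2*η0*η1))*(σ x * (e₁ x ⬝ᵥ e₂ x))) (volume.restrict Ω) := j1.add j2
    have j123 : Integrable (fun x => (ξ0^2+t^2*η0^2)*(σ x * (e₁ x ⬝ᵥ e₁ x)) + (2*(ξ0*ξ1+t^2*η0*η1))*(σ x * (e₁ x ⬝ᵥ e₂ x)) + (ξ1^2+t^2*η1^2)*(σ x * (e₂ x ⬝ᵥ e₂ x))) (volume.restrict Ω) := j12.add j3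
    have j1234 : Integrable (fun x => (ξ0^2+t^2*η0^2)*(σ x * (e₁ x ⬝ᵥ e₁ x)) + (2*(ξ0*ξ1+t^2*η0*η1))*(σ x * (e₁ x ⬝ᵥ e₂ x)) + (ξ1^2+t^2*η1^2)*(σ x * (e₂ x ⬝ᵥ e₂ x)) + (-(2*t*σ₂*(ξ0*η1-ξ1*η0)))*(e₁ x ⬝ᵥ Rperp.mulVec (e₂ x))) (volume.restrict Ω) := j123.add j4
    have key := setIntegral_mono_on i123456 j1234 hΩmeas hpt
    rw [integral_add i12345 (integrable_const _),
        integral_add i1234 i5,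
        integral_add i123 i4,
        integral_add i12 i3,
        integral_add i1 i2,
        integral_add j123 j4,
        integral_add j12 j3,
        integral_add j1 j2] at key
    simp only [integral_const_mul, setIntegral_const, smul_eq_mul, measureReal_def] at key
    rw [hIS11, hIS12, hIS22, hIRB, hIE0, hIE1, hIF0, hIF1, hIχ] at key
    have key2 : (volume Ω).toReal *
        (2*(α0*ξ0 + α1*ξ1) + 2*t*(α1*η0 - α0*η1)
          - (α0^2+α1^2)*((1-f₁)/σ₂ + 2*f₁/(σ₁+σ₂)))
        ≤ (volume Ω).toReal *
        ((A 0 0*ξ0^2 + 2*(A 0 1)*ξ0*ξ1 + A 1 1*ξ1^2)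
          + t^2*(A 0 0*η0^2 + 2*(A 0 1)*η0*η1 + A 1 1*η1^2)
          - 2*t*σ₂*(ξ0*η1 - ξ1*η0)*b') := by
      ring_nf at key ⊢
      linarith [key]
    exact le_of_mul_le_mul_left key2 hV
  -- Part 1
  have hQpos : ∀ p q : ℝ, 0 ≤ A 0 0*p^2 + 2*(A 0 1)*p*q + A 1 1*q^2 := by
    intro p q
    have h := master p q 0 0 0 0 0
    linarith [h]
  have hbil1 : ∀ p q r s : ℝ, (p*s - q*r)^2 * (σ₂*b')^2 ≤
      (A 0 0*p^2+2*(A 0 1)*p*q+A 1 1*q^2)*(A 0 0*r^2+2*(A 0 1)*r*s+A 1 1*s^2) := by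
    intro p q r s
    have hdis := discrim_le_zero (a := A 0 0*r^2+2*(A 0 1)*r*s+A 1 1*s^2)
      (b := -(2*σ₂*(p*s - q*r)*b'))
      (c := A 0 0*p^2+2*(A 0 1)*p*q+A 1 1*q^2) ?_
    · rw [discrim] at hdis
      linarith [hdis]
    · intro x
      have h := master p q r s x 0 0
      linarith [h]
  have part1 : σ₂ ^ 2 * b' ^ 2 ≤ A.det := by
    have h := quad_det_aux (A 0 0) (A 0 1) (A 1 1) (σ₂*b') hQpos hbil1
    rw [Matrix.det_fin_two, ← hA_symm]
    linarith [h]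
  -- volume fraction in [0,1], positivity of the harmonic-type mean
  have hf₁0 : 0 ≤ f₁ := by
    rw [hf₁]
    unfold avg
    apply mul_nonneg (inv_nonneg.mpr hV.le)
    apply setIntegral_nonneg hΩmeas
    intro x _
    rcases hχ01 x with h | h <;> simp [h]
  have hf₁1 : f₁ ≤ 1 := by
    have hint : (∫ x in Ω, χ₁ x) ≤ ∫ x in Ω, (1:ℝ) := by
      apply setIntegral_mono_on hiχ (integrable_const 1) hΩmeas
      intro x _
      rcases hχ01 x with h | h <;> simp [h]
    rw [setIntegral_const, smul_eq_mul, mul_one] at hint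
    rw [hf₁]
    unfold avg
    rw [inv_mul_eq_div, div_le_one hV]
    exact hint
  have hcpos : 0 < (1-f₁)/σ₂ + 2*f₁/(σ₁+σ₂) := by
    rcases lt_or_ge f₁ 1 with h | h
    · exact add_pos_of_pos_of_nonneg (div_pos (by linarith) hσ₂)
        (div_nonneg (by linarith) hsum.le)
    · exact add_pos_of_nonneg_of_pos (div_nonneg (by linarith) hσ₂.le)
        (div_pos (by linarith) hsum)
  have hcne : ((1-f₁)/σ₂ + 2*f₁/(σ₁+σ₂)) ≠ 0 := ne_of_gt hcpos
  set cc := (1-f₁)/σ₂ + 2*f₁/(σ₁+σ₂) with hccdef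
  -- translated inequality
  have hB : ∀ ξ0 ξ1 η0 η1 t : ℝ,
      (ξ0-t*η1)^2 + (ξ1+t*η0)^2 ≤ cc *
        ((A 0 0*ξ0^2 + 2*(A 0 1)*ξ0*ξ1 + A 1 1*ξ1^2)
          + t^2*(A 0 0*η0^2 + 2*(A 0 1)*η0*η1 + A 1 1*η1^2)
          - 2*t*σ₂*(ξ0*η1 - ξ1*η0)*b') := by
    intro ξ0 ξ1 η0 η1 t
    have h := master ξ0 ξ1 η0 η1 t ((ξ0-t*η1)/cc)
      ((ξ1+t*η0)/cc)
    have hLeq : 2*(((ξ0-t*η1)/cc)*ξ0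
          + ((ξ1+t*η0)/cc)*ξ1)
        + 2*t*(((ξ1+t*η0)/cc)*η0
          - ((ξ0-t*η1)/cc)*η1)
        - (((ξ0-t*η1)/cc)^2
          + ((ξ1+t*η0)/cc)^2)*cc
        = ((ξ0-t*η1)^2 + (ξ1+t*η0)^2)/cc := by
      field_simp
      ring
    rw [hLeq, div_le_iff₀ hcpos] at h
    linarith [h]
  have hBpsd : ∀ p q : ℝ, 0 ≤ (cc*(A 0 0) - 1)*p^2
      + 2*(cc*(A 0 1))*p*q
      + (cc*(A 1 1) - 1)*q^2 := by
    intro p q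
    have h := hB p q 0 0 0
    linarith [h]
  have hbil2 : ∀ p q r s : ℝ,
      (p*s - q*r)^2 * (cc*(σ₂*b') - 1)^2 ≤
      ((cc*(A 0 0) - 1)*p^2
        + 2*(cc*(A 0 1))*p*q
        + (cc*(A 1 1) - 1)*q^2)
      *((cc*(A 0 0) - 1)*r^2
        + 2*(cc*(A 0 1))*r*s
        + (cc*(A 1 1) - 1)*s^2) := by
    intro p q r s
    have hdis := discrim_le_zero
      (a := (cc*(A 0 0) - 1)*r^2
        + 2*(cc*(A 0 1))*r*s
        + (cc*(A 1 1) - 1)*s^2)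
      (b := -(2*(p*s - q*r)*(cc*(σ₂*b') - 1)))
      (c := (cc*(A 0 0) - 1)*p^2
        + 2*(cc*(A 0 1))*p*q
        + (cc*(A 1 1) - 1)*q^2) ?_
    · rw [discrim] at hdis
      linarith [hdis]
    · intro x
      have h := hB p q r s x
      linarith [h]
  have h2 := quad_det_aux _ _ _ _ hBpsd hbil2
  have part2 : A.trace - 2 * b' * σ₂ ≤
      cc * (A.det - b' ^ 2 * σ₂ ^ 2) := by
    rw [Matrix.trace_fin_two, Matrix.det_fin_two, ← hA_symm]
    have key : cc * (A 0 0 + A 1 1 - 2*b'*σ₂)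
        ≤ cc *
          (cc * (A 0 0*A 1 1 - A 0 1*A 0 1 - b'^2*σ₂^2)) := by
      linarith [h2]
    have := le_of_mul_le_mul_left key hcpos
    linarith [this]
  refine ⟨part1, ?_, ?_⟩
  · rw [hf₂, ← hccdef]
    exact part2
  · intro hlt
    have hD : 0 < A.det - b' ^ 2 * σ₂ ^ 2 := by linarith [hlt]
    have hTD : (A.trace - 2*b'*σ₂)/(A.det - b'^2*σ₂^2) ≤ cc := by
      rw [div_le_iff₀ hD]
      linarith [part2]
    have hKpos : 0 ≤ σ₂ * (σ₁ + σ₂) / (σ₁ - σ₂) := by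
      apply div_nonneg _ (by linarith)
      positivity
    have hEq : σ₂ * (σ₁ + σ₂) / (σ₁ - σ₂) * (1/σ₂ - cc) = f₁ := by
      rw [hccdef]
      have h1 : σ₂ ≠ 0 := ne_of_gt hσ₂
      have h2 : σ₁ + σ₂ ≠ 0 := ne_of_gt hsum
      have h3 : σ₁ - σ₂ ≠ 0 := sub_ne_zero.mpr (ne_of_gt hσ)
      field_simp
      ring
    calc f₁ = σ₂ * (σ₁ + σ₂) / (σ₁ - σ₂) * (1/σ₂ - cc) := hEq.symm
      _ ≤ σ₂ * (σ₁ + σ₂) / (σ₁ - σ₂) *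
          (1 / σ₂ - (A.trace - 2 * b' * σ₂) / (A.det - b' ^ 2 * σ₂ ^ 2)) := by
        apply mul_le_mul_of_nonneg_left _ hKpos
        linarith [hTD]
end
end

section
/- Let j₁, j₂ ∈ L²(Ω;ℝ²) with ⟨j₁⟩ = (1,0)ᵀ and ⟨j₂⟩ = (0,1)ᵀ, let A = (a_{ij}) with a_{ij} = ⟨σ⁻¹ jᵢ·jⱼ⟩ and b = ⟨j₁·R⊥j₂⟩. Let L(x) := [[σ(x)⁻¹I₂, σ₁⁻¹R⊥],[−σ₁⁻¹R⊥, σ(x)⁻¹I₂]], g := f₁σ₁(σ₁−σ₂)/(σ₁+σ₂) + 2σ₁σ₂/(σ₁+σ₂), and M_∞ := (1/g)[[I₂,R⊥],[−R⊥,I₂]]. For K = (k₁,k₂,k₃,k₄) ∈ ℝ⁴ define J_K := (k₁j₁+k₂j₂, k₃j₁+k₄j₂) ∈ L²(Ω;ℝ⁴). If for every K with |K| = 1 the function x ↦ L(x)J_K(x) − M_∞⟨J_K⟩ is not almost everywhere zero on Ω, then det A − b²/σ₁² > 0 and the strict inequality f₁ > ((σ₁+σ₂)/(σ₁(σ₁−σ₂)))·[(Tr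 A − 2b/σ₁)/(det A − b²/σ₁²) − 2σ₁σ₂/(σ₁+σ₂)] holds; i.e., the translation lower bound on the volume fraction is not attained. -/
open MeasureTheory Matrix

noncomputable section

lemma sq2_zero {a b : ℝ} (h : a^2 + b^2 = 0) : a = 0 ∧ b = 0 := by
  constructor <;>
  · rw [← sq_eq_zero_iff]
    exact le_antisymm (by nlinarith [sq_nonneg a, sq_nonneg b]) (sq_nonneg _)

lemma psd_nonneg (s s1 a b c d : ℝ) (hs : 0 < s) (hss : s ≤ s1) :
    0 ≤ s⁻¹ * (a^2+b^2+c^2+d^2) + 2 * s1⁻¹ * (a*d - b*c) := by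
  have hs1 : 0 < s1 := lt_of_lt_of_le hs hss
  have h1 : s1⁻¹ ≤ s⁻¹ := by apply inv_anti₀ hs hss
  have h2 : 0 < s1⁻¹ := by positivity
  nlinarith [sq_nonneg (a+d), sq_nonneg (b-c), sq_nonneg a, sq_nonneg b, sq_nonneg c, sq_nonneg d]

lemma psd_kernel (s s1 a b c d : ℝ) (hs : 0 < s) (hs1 : s ≤ s1)
    (hcase : s = s1 ∨ s < s1)
    (h0 : s⁻¹ * (a^2+b^2+c^2+d^2) + 2 * s1⁻¹ * (a*d - b*c) = 0) :
    s⁻¹ * a + s1⁻¹ * d = 0 ∧ s⁻¹ * b - s1⁻¹ * c = 0 ∧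
    -(s1⁻¹ * b) + s⁻¹ * c = 0 ∧ s1⁻¹ * a + s⁻¹ * d = 0 := by
  have hs1' : 0 < s1 := lt_of_lt_of_le hs hs1
  have h2 : 0 < s1⁻¹ := by positivity
  have h3 : 0 < s⁻¹ := by positivity
  rcases hcase with h | h
  · subst h
    have h5 : s⁻¹ * ((a+d)^2 + (b-c)^2) = 0 := by linear_combination h0
    have h6 : (a+d)^2 + (b-c)^2 = 0 := by
      rcases mul_eq_zero.mp h5 with h | h
      · exact absurd h (ne_of_gt h3)
      · exact h
    obtain ⟨h7, h8⟩ := sq2_zero h6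
    refine ⟨by linear_combination s⁻¹ * h7, by linear_combination s⁻¹ * h8,
      by linear_combination (-(s⁻¹)) * h8, by linear_combination s⁻¹ * h7⟩
  · have hlt : s1⁻¹ < s⁻¹ := by exact inv_strictAnti₀ hs h
    have hsum : a^2+b^2+c^2+d^2 = 0 := by
      nlinarith [sq_nonneg (a+d), sq_nonneg (b-c), sq_nonneg a, sq_nonneg b, sq_nonneg c,
        sq_nonneg d]
    obtain ⟨h4, h5⟩ := sq2_zero (a := a) (b := b) (by nlinarith [sq_nonneg c, sq_nonneg d])
    obtain ⟨h6, h7⟩ := sq2_zero (a := c) (b := d) (by nlinarith [sq_nonneg a, sq_nonneg b])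
    subst h4; subst h5; subst h6; subst h7
    refine ⟨by ring, by ring, by ring, by ring⟩

lemma memLp_mul_integrable {α : Type*} {m : MeasurableSpace α} {μ : Measure α}
    {f g : α → ℝ} (hf : MemLp f 2 μ) (hg : MemLp g 2 μ) :
    Integrable (fun x => f x * g x) μ := by
  have h1 := (hf.add hg).integrable_sq
  have h2 := hf.integrable_sq
  have h3 := hg.integrable_sq
  have h4 := ((h1.sub h2).sub h3).mul_const (1/2 : ℝ)
  apply h4.congr
  filter_upwards with x
  simp [Pi.add_apply]
  ring


lemma algebra_final (a11 a12 a22 β g : ℝ) (hg : 0 < g)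
    (hQ : ∀ k₁ k₂ k₃ k₄ : ℝ, k₁^2+k₂^2+k₃^2+k₄^2 ≠ 0 →
      0 < a11*(k₁^2+k₃^2) + a22*(k₂^2+k₄^2) + 2*a12*(k₁*k₂+k₃*k₄)
          + 2*β*(k₁*k₄-k₂*k₃)
          - g⁻¹*((k₁^2+k₂^2+k₃^2+k₄^2) + 2*(k₁*k₄-k₂*k₃))) :
    0 < a11*a22 - a12^2 - β^2 ∧ a11 + a22 - 2*β < g * (a11*a22 - a12^2 - β^2) := by
  have hGpos : 0 < g⁻¹ := by positivity
  have hgG : g * g⁻¹ = 1 := by field_simp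
  have hp : 0 < a11 - g⁻¹ := by have := hQ 1 0 0 0 (by norm_num); nlinarith [this]
  have hr : 0 < a22 - g⁻¹ := by have := hQ 0 1 0 0 (by norm_num); nlinarith [this]
  have htr : 0 < a11 + a22 - 2*β := by
    have := hQ 1 0 0 (-1) (by norm_num); nlinarith [this]
  have hD : 0 < (a11-g⁻¹)*(a22-g⁻¹) - a12^2 := by
    have hne : a12^2 + (-(a11-g⁻¹))^2 + (0:ℝ)^2 + (0:ℝ)^2 ≠ 0 := by
      have : (0:ℝ) < a12^2 + (-(a11-g⁻¹))^2 + (0:ℝ)^2 + (0:ℝ)^2 := by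
        nlinarith [sq_nonneg a12, hp]
      exact this.ne'
    have := hQ a12 (-(a11-g⁻¹)) 0 0 hne
    nlinarith [this, hp]
  have hDc : 0 < ((a11-g⁻¹)*(a22-g⁻¹) - a12^2) - (β-g⁻¹)^2 := by
    have hne : ((a11-g⁻¹)*(a22-g⁻¹) - a12^2)^2 + (0:ℝ)^2 + ((β-g⁻¹)*a12)^2
        + (-((β-g⁻¹)*(a11-g⁻¹)))^2 ≠ 0 := by
      have : (0:ℝ) < ((a11-g⁻¹)*(a22-g⁻¹) - a12^2)^2 + (0:ℝ)^2 + ((β-g⁻¹)*a12)^2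
          + (-((β-g⁻¹)*(a11-g⁻¹)))^2 := by positivity
      exact this.ne'
    have h5 := hQ ((a11-g⁻¹)*(a22-g⁻¹) - a12^2) 0 ((β-g⁻¹)*a12)
      (-((β-g⁻¹)*(a11-g⁻¹))) hne
    have h6 : 0 < (a11-g⁻¹)*((a11-g⁻¹)*(a22-g⁻¹) - a12^2)
        *(((a11-g⁻¹)*(a22-g⁻¹) - a12^2) - (β-g⁻¹)^2) := by linarith [h5]
    nlinarith [h6, mul_pos hp hD]
  have h7 : g * (g⁻¹*(a11+a22-2*β)) = a11+a22-2*β := by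
    rw [← mul_assoc, hgG, one_mul]
  constructor
  · nlinarith [hDc, mul_pos hGpos htr]
  · nlinarith [mul_pos hg hDc, h7]

lemma avg_two (Ω : Set (Fin 2 → ℝ)) {f g : (Fin 2 → ℝ) → ℝ} (a b : ℝ)
    (hf : Integrable f (volume.restrict Ω)) (hg : Integrable g (volume.restrict Ω)) :
    avg Ω (fun x => a * f x + b * g x) = a * avg Ω f + b * avg Ω g := by
  unfold avg
  rw [integral_add (hf.const_mul a) (hg.const_mul b), integral_const_mul, integral_const_mul]
  ring

lemma avg_comb10 (Ω : Set (Fin 2 → ℝ))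
    {t1 t2 t3 t4 t5 t6 t7 t8 t9 : (Fin 2 → ℝ) → ℝ}
    (c1 c2 c3 c4 c5 c6 c7 c8 c9 c10 : ℝ)
    (h1 : Integrable t1 (volume.restrict Ω)) (h2 : Integrable t2 (volume.restrict Ω))
    (h3 : Integrable t3 (volume.restrict Ω)) (h4 : Integrable t4 (volume.restrict Ω))
    (h5 : Integrable t5 (volume.restrict Ω)) (h6 : Integrable t6 (volume.restrict Ω))
    (h7 : Integrable t7 (volume.restrict Ω)) (h8 : Integrable t8 (volume.restrict Ω))
    (h9 : Integrable t9 (volume.restrict Ω))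
    (hfin : IsFiniteMeasure (volume.restrict Ω))
    (hΩ : (volume Ω).toReal ≠ 0) :
    avg Ω (fun x => c1 * t1 x + c2 * t2 x + c3 * t3 x + c4 * t4 x + c5 * t5 x + c6 * t6 x
      + c7 * t7 x + c8 * t8 x + c9 * t9 x + c10)
    = c1 * avg Ω t1 + c2 * avg Ω t2 + c3 * avg Ω t3 + c4 * avg Ω t4 + c5 * avg Ω t5
      + c6 * avg Ω t6 + c7 * avg Ω t7 + c8 * avg Ω t8 + c9 * avg Ω t9 + c10 := by
  haveI := hfin
  have i1 := h1.const_mul c1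
  have i2 := h2.const_mul c2
  have i3 := h3.const_mul c3
  have i4 := h4.const_mul c4
  have i5 := h5.const_mul c5
  have i6 := h6.const_mul c6
  have i7 := h7.const_mul c7
  have i8 := h8.const_mul c8
  have i9 := h9.const_mul c9
  have j1 := i1
  have j2 : Integrable (fun x => c1 * t1 x + c2 * t2 x) (volume.restrict Ω) := j1.add i2
  have j3 : Integrable (fun x => c1 * t1 x + c2 * t2 x + c3 * t3 x) (volume.restrict Ω) := j2.add i3
  have j4 : Integrable (fun x => c1 * t1 x + c2 * t2 x + c3 * t3 x + c4 * t4 x) (volume.restrict Ω) := j3.add i4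
  have j5 : Integrable (fun x => c1 * t1 x + c2 * t2 x + c3 * t3 x + c4 * t4 x + c5 * t5 x) (volume.restrict Ω) := j4.add i5
  have j6 : Integrable (fun x => c1 * t1 x + c2 * t2 x + c3 * t3 x + c4 * t4 x + c5 * t5 x + c6 * t6 x) (volume.restrict Ω) := j5.add i6
  have j7 : Integrable (fun x => c1 * t1 x + c2 * t2 x + c3 * t3 x + c4 * t4 x + c5 * t5 x + c6 * t6 x + c7 * t7 x) (volume.restrict Ω) := j6.add i7
  have j8 : Integrable (fun x => c1 * t1 x + c2 * t2 x + c3 * t3 x + c4 * t4 x + c5 * t5 x + c6 * t6 x + c7 * t7 x + c8 * t8 x) (volume.restrict Ω) := j7.add i8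
  have j9 : Integrable (fun x => c1 * t1 x + c2 * t2 x + c3 * t3 x + c4 * t4 x + c5 * t5 x + c6 * t6 x + c7 * t7 x + c8 * t8 x + c9 * t9 x) (volume.restrict Ω) := j8.add i9
  have E1 : (∫ x in Ω, (c1 * t1 x)) = c1 * (∫ x in Ω, t1 x) := integral_const_mul _ _
  have E2 : (∫ x in Ω, (c1 * t1 x + c2 * t2 x))
      = c1 * (∫ x in Ω, t1 x) + c2 * (∫ x in Ω, t2 x) := by
    rw [integral_add j1 i2, E1, integral_const_mul]
  have E3 : (∫ x in Ω, (c1 * t1 x + c2 * t2 x + c3 * t3 x))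
      = c1 * (∫ x in Ω, t1 x) + c2 * (∫ x in Ω, t2 x) + c3 * (∫ x in Ω, t3 x) := by
    rw [integral_add j2 i3, E2, integral_const_mul]
  have E4 : (∫ x in Ω, (c1 * t1 x + c2 * t2 x + c3 * t3 x + c4 * t4 x))
      = c1 * (∫ x in Ω, t1 x) + c2 * (∫ x in Ω, t2 x) + c3 * (∫ x in Ω, t3 x) + c4 * (∫ x in Ω, t4 x) := by
    rw [integral_add j3 i4, E3, integral_const_mul]
  have E5 : (∫ x in Ω, (c1 * t1 x + c2 * t2 x + c3 * t3 x + c4 * t4 x + c5 * t5 x))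
      = c1 * (∫ x in Ω, t1 x) + c2 * (∫ x in Ω, t2 x) + c3 * (∫ x in Ω, t3 x) + c4 * (∫ x in Ω, t4 x) + c5 * (∫ x in Ω, t5 x) := by
    rw [integral_add j4 i5, E4, integral_const_mul]
  have E6 : (∫ x in Ω, (c1 * t1 x + c2 * t2 x + c3 * t3 x + c4 * t4 x + c5 * t5 x + c6 * t6 x))
      = c1 * (∫ x in Ω, t1 x) + c2 * (∫ x in Ω, t2 x) + c3 * (∫ x in Ω, t3 x) + c4 * (∫ x in Ω, t4 x) + c5 * (∫ x in Ω, t5 x) + c6 * (∫ x in Ω, t6 x) := by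
    rw [integral_add j5 i6, E5, integral_const_mul]
  have E7 : (∫ x in Ω, (c1 * t1 x + c2 * t2 x + c3 * t3 x + c4 * t4 x + c5 * t5 x + c6 * t6 x + c7 * t7 x))
      = c1 * (∫ x in Ω, t1 x) + c2 * (∫ x in Ω, t2 x) + c3 * (∫ x in Ω, t3 x) + c4 * (∫ x in Ω, t4 x) + c5 * (∫ x in Ω, t5 x) + c6 * (∫ x in Ω, t6 x) + c7 * (∫ x in Ω, t7 x) := by
    rw [integral_add j6 i7, E6, integral_const_mul]
  have E8 : (∫ x in Ω, (c1 * t1 x + c2 * t2 x + c3 * t3 x + c4 * t4 x + c5 * t5 x + c6 * t6 x + c7 * t7 x + c8 * t8 x))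
      = c1 * (∫ x in Ω, t1 x) + c2 * (∫ x in Ω, t2 x) + c3 * (∫ x in Ω, t3 x) + c4 * (∫ x in Ω, t4 x) + c5 * (∫ x in Ω, t5 x) + c6 * (∫ x in Ω, t6 x) + c7 * (∫ x in Ω, t7 x) + c8 * (∫ x in Ω, t8 x) := by
    rw [integral_add j7 i8, E7, integral_const_mul]
  have E9 : (∫ x in Ω, (c1 * t1 x + c2 * t2 x + c3 * t3 x + c4 * t4 x + c5 * t5 x + c6 * t6 x + c7 * t7 x + c8 * t8 x + c9 * t9 x))
      = c1 * (∫ x in Ω, t1 x) + c2 * (∫ x in Ω, t2 x) + c3 * (∫ x in Ω, t3 x) + c4 * (∫ x in Ω, t4 x) + c5 * (∫ x in Ω, t5 x) + c6 * (∫ x in Ω, t6 x) + c7 * (∫ x in Ω, t7 x) + c8 * (∫ x in Ω, t8 x) + c9 * (∫ x in Ω, t9 x) := by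
    rw [integral_add j8 i9, E8, integral_const_mul]
  have E10 : (∫ x in Ω, (c1 * t1 x + c2 * t2 x + c3 * t3 x + c4 * t4 x + c5 * t5 x + c6 * t6 x + c7 * t7 x + c8 * t8 x + c9 * t9 x + c10))
      = c1 * (∫ x in Ω, t1 x) + c2 * (∫ x in Ω, t2 x) + c3 * (∫ x in Ω, t3 x) + c4 * (∫ x in Ω, t4 x) + c5 * (∫ x in Ω, t5 x) + c6 * (∫ x in Ω, t6 x) + c7 * (∫ x in Ω, t7 x) + c8 * (∫ x in Ω, t8 x) + c9 * (∫ x in Ω, t9 x) + (volume Ω).toReal * c10 := by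
    rw [integral_add j9 (integrable_const c10), E9, setIntegral_const, smul_eq_mul, measureReal_def]
  unfold avg
  rw [E10]
  field_simp

set_option maxHeartbeats 4000000 in
/-- If for every unit vector `K` the field `L J_K - M_∞⟨J_K⟩` is not a.e. zero, then the
translation lower bound on the volume fraction is not attained (strict inequality holds);
see (3.1)–(3.3) of the paper. -/
theorem lower_bound_not_attained
    (Ω : Set (Fin 2 → ℝ)) (hΩmeas : MeasurableSet Ω)
    (hΩbdd : Bornology.IsBounded Ω) (hΩpos : 0 < (volume Ω).toReal)
    (χ₁ : (Fin 2 → ℝ) → ℝ) (hχmeas : Measurable χ₁)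
    (hχ01 : ∀ x, χ₁ x = 0 ∨ χ₁ x = 1)
    (σ₁ σ₂ : ℝ) (hσ₂ : 0 < σ₂) (hσ : σ₂ < σ₁)
    (σ : (Fin 2 → ℝ) → ℝ)
    (hσdef : ∀ x, σ x = σ₁ * χ₁ x + σ₂ * (1 - χ₁ x))
    (f₁ : ℝ) (hf₁ : f₁ = avg Ω χ₁)
    (j₁ j₂ : (Fin 2 → ℝ) → (Fin 2 → ℝ))
    (hj₁ : MemLp j₁ 2 (volume.restrict Ω))
    (hj₂ : MemLp j₂ 2 (volume.restrict Ω))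
    -- normalization `⟨j₁⟩ = (1,0)ᵀ`, `⟨j₂⟩ = (0,1)ᵀ`
    (hj₁avg : avg Ω (fun x => j₁ x 0) = 1 ∧ avg Ω (fun x => j₁ x 1) = 0)
    (hj₂avg : avg Ω (fun x => j₂ x 0) = 0 ∧ avg Ω (fun x => j₂ x 1) = 1)
    (A : Matrix (Fin 2) (Fin 2) ℝ)
    (hA11 : A 0 0 = avg Ω (fun x => (σ x)⁻¹ * (j₁ x ⬝ᵥ j₁ x)))
    (hA12 : A 0 1 = avg Ω (fun x => (σ x)⁻¹ * (j₁ x ⬝ᵥ j₂ x)))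
    (hA21 : A 1 0 = avg Ω (fun x => (σ x)⁻¹ * (j₂ x ⬝ᵥ j₁ x)))
    (hA22 : A 1 1 = avg Ω (fun x => (σ x)⁻¹ * (j₂ x ⬝ᵥ j₂ x)))
    (b : ℝ) (hb : b = avg Ω (fun x => j₁ x ⬝ᵥ Rperp.mulVec (j₂ x)))
    -- `L x` is the translated tensor at `c = 1/σ₁`
    (L : (Fin 2 → ℝ) → Matrix (Fin 4) (Fin 4) ℝ)
    (hL : ∀ x, L x = !![(σ x)⁻¹, 0, 0, σ₁⁻¹;
                        0, (σ x)⁻¹, -σ₁⁻¹, 0;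
                        0, -σ₁⁻¹, (σ x)⁻¹, 0;
                        σ₁⁻¹, 0, 0, (σ x)⁻¹])
    (g : ℝ) (hg : g = f₁ * σ₁ * (σ₁ - σ₂) / (σ₁ + σ₂) + 2 * σ₁ * σ₂ / (σ₁ + σ₂))
    (Minf : Matrix (Fin 4) (Fin 4) ℝ) (hMinf : Minf = g⁻¹ • blockIRperp)
    -- `J_K = (k₁j₁ + k₂j₂, k₃j₁ + k₄j₂)`
    (JK : (Fin 4 → ℝ) → (Fin 2 → ℝ) → (Fin 4 → ℝ))
    (hJK : ∀ K x, JK K x = ![K 0 * j₁ x 0 + K 1 * j₂ x 0,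
                             K 0 * j₁ x 1 + K 1 * j₂ x 1,
                             K 2 * j₁ x 0 + K 3 * j₂ x 0,
                             K 2 * j₁ x 1 + K 3 * j₂ x 1])
    -- for every unit `K`, the attainability field is not a.e. zero
    (hnot : ∀ K : Fin 4 → ℝ, K 0 ^ 2 + K 1 ^ 2 + K 2 ^ 2 + K 3 ^ 2 = 1 →
      ¬ (∀ᵐ x ∂(volume.restrict Ω),
          (L x).mulVec (JK K x) =
            Minf.mulVec (fun i => avg Ω (fun y => JK K y i)))) :
    0 < A.det - b ^ 2 / σ₁ ^ 2 ∧
    f₁ > (σ₁ + σ₂) / (σ₁ * (σ₁ - σ₂)) *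
      ((A.trace - 2 * b / σ₁) / (A.det - b ^ 2 / σ₁ ^ 2) -
        2 * σ₁ * σ₂ / (σ₁ + σ₂)) := by
  haveI hfin : IsFiniteMeasure (volume.restrict Ω) :=
    ⟨by rw [Measure.restrict_apply_univ]; exact hΩbdd.measure_lt_top⟩
  have hΩne : (volume Ω).toReal ≠ 0 := ne_of_gt hΩpos
  -- rewrite hypotheses in component form
  have edot : ∀ f h : (Fin 2 → ℝ) → (Fin 2 → ℝ),
      (fun x => (σ x)⁻¹ * (f x ⬝ᵥ h x))
        = fun x => (σ x)⁻¹ * (f x 0 * h x 0 + f x 1 * h x 1) := by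
    intro f h; funext x
    rw [show f x ⬝ᵥ h x = f x 0 * h x 0 + f x 1 * h x 1 from by
      simp [dotProduct, Fin.sum_univ_two]]
  rw [edot j₁ j₁] at hA11
  rw [edot j₁ j₂] at hA12
  rw [edot j₂ j₁] at hA21
  rw [edot j₂ j₂] at hA22
  have erp : (fun x => j₁ x ⬝ᵥ Rperp.mulVec (j₂ x))
      = fun x => j₁ x 0 * j₂ x 1 - j₁ x 1 * j₂ x 0 := by
    funext x
    simp [Rperp, Matrix.mulVec, dotProduct, Fin.sum_univ_two]
    ring
  rw [erp] at hb
  have hAsym : A 1 0 = A 0 1 := by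
    rw [hA12, hA21]; congr 1; funext x; ring
  -- basic facts on σ
  have hσ1pos : 0 < σ₁ := lt_trans hσ₂ hσ
  have hs12pos : 0 < σ₁ + σ₂ := by linarith
  have hσcase : ∀ x, σ x = σ₁ ∨ σ x = σ₂ := by
    intro x
    rcases hχ01 x with h | h
    · right; rw [hσdef x, h]; ring
    · left; rw [hσdef x, h]; ring
  have hσpos : ∀ x, 0 < σ x := by
    intro x; rcases hσcase x with h | h <;> rw [h] <;> [exact hσ1pos; exact hσ₂]
  have hσle : ∀ x, σ x ≤ σ₁ := by
    intro x; rcases hσcase x with h | h <;> rw [h] <;> linarith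
  have hσ2le : ∀ x, σ₂ ≤ σ x := by
    intro x; rcases hσcase x with h | h <;> rw [h] <;> linarith
  have hcase : ∀ x, σ x = σ₁ ∨ σ x < σ₁ := by
    intro x; rcases hσcase x with h | h
    · exact Or.inl h
    · right; rw [h]; exact hσ
  have hσm : Measurable σ := by
    have : σ = fun x => σ₁ * χ₁ x + σ₂ * (1 - χ₁ x) := funext hσdef
    rw [this]
    exact (hχmeas.const_mul σ₁).add ((measurable_const.sub hχmeas).const_mul σ₂)
  have hσinvm : AEStronglyMeasurable (fun x => (σ x)⁻¹) (volume.restrict Ω) :=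
    hσm.inv.aestronglyMeasurable
  have hσbnd : ∃ Cb, ∀ x, ‖(σ x)⁻¹‖ ≤ Cb := by
    refine ⟨σ₂⁻¹, fun x => ?_⟩
    rw [Real.norm_eq_abs, abs_of_pos (inv_pos.mpr (hσpos x))]
    exact inv_anti₀ hσ₂ (hσ2le x)
  -- memℒp and integrability of components
  have hc1 : ∀ i, MemLp (fun x => j₁ x i) 2 (volume.restrict Ω) := fun i =>
    (ContinuousLinearMap.proj (R := ℝ) (φ := fun _ : Fin 2 => ℝ) i).comp_memLp' hj₁
  have hc2 : ∀ i, MemLp (fun x => j₂ x i) 2 (volume.restrict Ω) := fun i =>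
    (ContinuousLinearMap.proj (R := ℝ) (φ := fun _ : Fin 2 => ℝ) i).comp_memLp' hj₂
  have hI10 : Integrable (fun x => j₁ x 0) (volume.restrict Ω) := (hc1 0).integrable one_le_two
  have hI11 : Integrable (fun x => j₁ x 1) (volume.restrict Ω) := (hc1 1).integrable one_le_two
  have hI20 : Integrable (fun x => j₂ x 0) (volume.restrict Ω) := (hc2 0).integrable one_le_two
  have hI21 : Integrable (fun x => j₂ x 1) (volume.restrict Ω) := (hc2 1).integrable one_le_two
  have hdot11 : Integrable (fun x => j₁ x 0 * j₁ x 0 + j₁ x 1 * j₁ x 1) (volume.restrict Ω) :=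
    (memLp_mul_integrable (hc1 0) (hc1 0)).add (memLp_mul_integrable (hc1 1) (hc1 1))
  have hdot22 : Integrable (fun x => j₂ x 0 * j₂ x 0 + j₂ x 1 * j₂ x 1) (volume.restrict Ω) :=
    (memLp_mul_integrable (hc2 0) (hc2 0)).add (memLp_mul_integrable (hc2 1) (hc2 1))
  have hdot12 : Integrable (fun x => j₁ x 0 * j₂ x 0 + j₁ x 1 * j₂ x 1) (volume.restrict Ω) :=
    (memLp_mul_integrable (hc1 0) (hc2 0)).add (memLp_mul_integrable (hc1 1) (hc2 1))
  have ht1 : Integrable (fun x => (σ x)⁻¹ * (j₁ x 0 * j₁ x 0 + j₁ x 1 * j₁ x 1))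
      (volume.restrict Ω) := hdot11.bdd_mul hσinvm (Filter.Eventually.of_forall hσbnd.choose_spec)
  have ht2 : Integrable (fun x => (σ x)⁻¹ * (j₂ x 0 * j₂ x 0 + j₂ x 1 * j₂ x 1))
      (volume.restrict Ω) := hdot22.bdd_mul hσinvm (Filter.Eventually.of_forall hσbnd.choose_spec)
  have ht3 : Integrable (fun x => (σ x)⁻¹ * (j₁ x 0 * j₂ x 0 + j₁ x 1 * j₂ x 1))
      (volume.restrict Ω) := hdot12.bdd_mul hσinvm (Filter.Eventually.of_forall hσbnd.choose_spec)
  have ht4 : Integrable (fun x => j₁ x 0 * j₂ x 1 - j₁ x 1 * j₂ x 0) (volume.restrict Ω) :=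
    (memLp_mul_integrable (hc1 0) (hc2 1)).sub (memLp_mul_integrable (hc1 1) (hc2 0))
  have ht9 : Integrable χ₁ (volume.restrict Ω) := by
    have h := ((integrable_const (1:ℝ)) : Integrable _ (volume.restrict Ω)).bdd_mul
      (f := χ₁) (c := 1) hχmeas.aestronglyMeasurable
      (Filter.Eventually.of_forall fun x => by rcases hχ01 x with h | h <;> rw [h] <;> norm_num)
    simpa using h
  -- positivity of g
  have hf₁0 : 0 ≤ f₁ := by
    rw [hf₁]
    unfold avg
    apply mul_nonneg (inv_nonneg.mpr ENNReal.toReal_nonneg)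
    apply integral_nonneg
    intro x
    rcases hχ01 x with h | h <;> rw [h] <;> norm_num
  have hgpos : 0 < g := by
    rw [hg, ← add_div]
    apply div_pos _ hs12pos
    nlinarith [mul_nonneg hf₁0 (mul_nonneg hσ1pos.le (by linarith : (0:ℝ) ≤ σ₁ - σ₂)),
      mul_pos hσ1pos hσ₂]
  have hgg : g * g⁻¹ = 1 := mul_inv_cancel₀ (ne_of_gt hgpos)
  -- key property of the optimal field multiplier
  have hcfkey : ∀ x, (σ₁/2 * χ₁ x + σ₁*σ₂/(σ₁+σ₂) * (1 - χ₁ x)) * ((σ x)⁻¹ + σ₁⁻¹) = 1 := by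
    intro x
    rcases hχ01 x with h | h
    · have hs : σ x = σ₂ := by rw [hσdef x, h]; ring
      rw [hs, h]
      field_simp
      ring
    · have hs : σ x = σ₁ := by rw [hσdef x, h]; ring
      rw [hs, h]
      field_simp
      ring
  have hhalf : σ₁/2 * f₁ - σ₁*σ₂/(σ₁+σ₂) * f₁ + σ₁*σ₂/(σ₁+σ₂) = g/2 := by
    rw [hg]
    field_simp
    ring
  -- THE KEY STEP: strict positivity of the translated quadratic form on unit vectors
  have key : ∀ k₁ k₂ k₃ k₄ : ℝ, k₁^2 + k₂^2 + k₃^2 + k₄^2 = 1 →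
      0 < A 0 0 * (k₁^2+k₃^2) + A 1 1 * (k₂^2+k₄^2) + 2 * A 0 1 * (k₁*k₂+k₃*k₄) + 2*(b/σ₁)*(k₁*k₄-k₂*k₃) - g⁻¹*((k₁^2+k₂^2+k₃^2+k₄^2) + 2*(k₁*k₄-k₂*k₃)) := by
    intro k₁ k₂ k₃ k₄ hunit
    set K : Fin 4 → ℝ := ![k₁, k₂, k₃, k₄] with hK
    have hK0 : K 0 = k₁ := rfl
    have hK1 : K 1 = k₂ := rfl
    have hK2 : K 2 = k₃ := rfl
    have hK3 : K 3 = k₄ := rfl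
    have hKunit : K 0 ^ 2 + K 1 ^ 2 + K 2 ^ 2 + K 3 ^ 2 = 1 := by
      rw [hK0, hK1, hK2, hK3]; exact hunit
    set F : (Fin 2 → ℝ) → ℝ := fun x => (σ x)⁻¹ * (((k₁ * j₁ x 0 + k₂ * j₂ x 0) - (σ₁/2 * χ₁ x + σ₁*σ₂/(σ₁+σ₂) * (1 - χ₁ x)) * (g⁻¹ * (k₁ + k₄)))^2 + ((k₁ * j₁ x 1 + k₂ * j₂ x 1) - (σ₁/2 * χ₁ x + σ₁*σ₂/(σ₁+σ₂) * (1 - χ₁ x)) * (g⁻¹ * (k₂ - k₃)))^2 + ((k₃ * j₁ x 0 + k₄ * j₂ x 0) + (σ₁/2 * χ₁ x + σ₁*σ₂/(σ₁+σ₂) * (1 - χ₁ x)) * (g⁻¹ * (k₂ - k₃)))^2 + ((k₃ * j₁ x 1 + k₄ * j₂ x 1) - (σ₁/2 * χ₁ x + σ₁*σ₂/(σ₁+σ₂) * (1 - χ₁ x)) * (g⁻¹ * (k₁ + k₄)))^2) + 2 * σ₁⁻¹ * (((k₁ * j₁ x 0 + k₂ * j₂ x 0) - (σ₁/2 * χ₁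 x + σ₁*σ₂/(σ₁+σ₂) * (1 - χ₁ x)) * (g⁻¹ * (k₁ + k₄))) * ((k₃ * j₁ x 1 + k₄ * j₂ x 1) - (σ₁/2 * χ₁ x + σ₁*σ₂/(σ₁+σ₂) * (1 - χ₁ x)) * (g⁻¹ * (k₁ + k₄))) - ((k₁ * j₁ x 1 + k₂ * j₂ x 1) - (σ₁/2 * χ₁ x + σ₁*σ₂/(σ₁+σ₂) * (1 - χ₁ x)) * (g⁻¹ * (k₂ - k₃))) * ((k₃ * j₁ x 0 + k₄ * j₂ x 0) + (σ₁/2 * χ₁ x + σ₁*σ₂/(σ₁+σ₂) * (1 - χ₁ x)) * (g⁻¹ * (k₂ - k₃)))) with hFdef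
    have hFpos : ∀ x, 0 ≤ F x := by
      intro x
      rw [hFdef]
      exact psd_nonneg (σ x) σ₁ _ _ _ _ (hσpos x) (hσle x)
    have hFeq : F = fun x => (k₁^2 + k₃^2) * ((σ x)⁻¹ * (j₁ x 0 * j₁ x 0 + j₁ x 1 * j₁ x 1)) + (k₂^2 + k₄^2) * ((σ x)⁻¹ * (j₂ x 0 * j₂ x 0 + j₂ x 1 * j₂ x 1)) + (2*(k₁*k₂ + k₃*k₄)) * ((σ x)⁻¹ * (j₁ x 0 * j₂ x 0 + j₁ x 1 * j₂ x 1)) + (2 * σ₁⁻¹ * (k₁*k₄ - k₂*k₃)) * (j₁ x 0 * j₂ x 1 - j₁ x 1 * j₂ x 0) + (-2*((g⁻¹ * (k₁ + k₄))*k₁ - (g⁻¹ * (k₂ - k₃))*k₃)) * (j₁ x 0) + (-2*((g⁻¹ * (k₂ - k₃))*k₁ + (g⁻¹ * (k₁ + k₄))*k₃)) * (j₁ x 1) + (-2*((g⁻¹ * (k₁ + k₄))*k₂ - (g⁻¹ * (k₂ - k₃))*k₄)) * (j₂ x 0) + (-2*((g⁻¹ * (k₂ - k₃))*k₂ + (g⁻¹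 * (k₁ + k₄))*k₄)) * (j₂ x 1) + ((2*((g⁻¹ * (k₁ + k₄))^2 + (g⁻¹ * (k₂ - k₃))^2)) * (σ₁/2 - σ₁*σ₂/(σ₁+σ₂))) * (χ₁ x) + ((2*((g⁻¹ * (k₁ + k₄))^2 + (g⁻¹ * (k₂ - k₃))^2)) * (σ₁*σ₂/(σ₁+σ₂))) := by
      funext x
      rw [hFdef]
      linear_combination ((σ₁/2 * χ₁ x + σ₁*σ₂/(σ₁+σ₂) * (1 - χ₁ x)) * (2*((g⁻¹ * (k₁ + k₄))^2 + (g⁻¹ * (k₂ - k₃))^2)) - 2*((g⁻¹ * (k₁ + k₄))*(k₁ * j₁ x 0 + k₂ * j₂ x 0) + (g⁻¹ * (k₂ - k₃))*(k₁ * j₁ x 1 + k₂ * j₂ x 1) - (g⁻¹ * (k₂ - k₃))*(k₃ * j₁ x 0 + k₄ * j₂ x 0) + (g⁻¹ * (k₁ + k₄))*(k₃ * j₁ x 1 + k₄ * j₂ x 1))) * hcfkey x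
    have hFint : Integrable F (volume.restrict Ω) := by
      rw [hFeq]
      exact (((((((((ht1.const_mul (k₁^2 + k₃^2)).add (ht2.const_mul (k₂^2 + k₄^2))).add
        (ht3.const_mul (2*(k₁*k₂ + k₃*k₄)))).add
        (ht4.const_mul (2 * σ₁⁻¹ * (k₁*k₄ - k₂*k₃)))).add
        (hI10.const_mul (-2*((g⁻¹ * (k₁ + k₄))*k₁ - (g⁻¹ * (k₂ - k₃))*k₃)))).add
        (hI11.const_mul (-2*((g⁻¹ * (k₂ - k₃))*k₁ + (g⁻¹ * (k₁ + k₄))*k₃)))).add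
        (hI20.const_mul (-2*((g⁻¹ * (k₁ + k₄))*k₂ - (g⁻¹ * (k₂ - k₃))*k₄)))).add
        (hI21.const_mul (-2*((g⁻¹ * (k₂ - k₃))*k₂ + (g⁻¹ * (k₁ + k₄))*k₄)))).add
        (ht9.const_mul ((2*((g⁻¹ * (k₁ + k₄))^2 + (g⁻¹ * (k₂ - k₃))^2)) * (σ₁/2 - σ₁*σ₂/(σ₁+σ₂))))).add
        (integrable_const ((2*((g⁻¹ * (k₁ + k₄))^2 + (g⁻¹ * (k₂ - k₃))^2)) * (σ₁*σ₂/(σ₁+σ₂))))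
    have hKavg : (fun i => avg Ω (fun y => JK K y i)) = K := by
      funext i
      fin_cases i
      · show avg Ω (fun y => JK K y 0) = k₁
        rw [show (fun y => JK K y 0) = fun y => k₁ * (fun z => j₁ z 0) y
            + k₂ * (fun z => j₂ z 0) y from by
          funext y; rw [hJK K y]; show K 0 * j₁ y 0 + K 1 * j₂ y 0 = _; rw [hK0, hK1]]
        rw [avg_two Ω k₁ k₂ hI10 hI20, hj₁avg.1, hj₂avg.1]
        ring
      · show avg Ω (fun y => JK K y 1) = k₂
        rw [show (fun y => JK K y 1) = fun y => k₁ * (fun z => j₁ z 1) y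
            + k₂ * (fun z => j₂ z 1) y from by
          funext y; rw [hJK K y]; show K 0 * j₁ y 1 + K 1 * j₂ y 1 = _; rw [hK0, hK1]]
        rw [avg_two Ω k₁ k₂ hI11 hI21, hj₁avg.2, hj₂avg.2]
        ring
      · show avg Ω (fun y => JK K y 2) = k₃
        rw [show (fun y => JK K y 2) = fun y => k₃ * (fun z => j₁ z 0) y
            + k₄ * (fun z => j₂ z 0) y from by
          funext y; rw [hJK K y]; show K 2 * j₁ y 0 + K 3 * j₂ y 0 = _; rw [hK2, hK3]]
        rw [avg_two Ω k₃ k₄ hI10 hI20, hj₁avg.1, hj₂avg.1]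
        ring
      · show avg Ω (fun y => JK K y 3) = k₄
        rw [show (fun y => JK K y 3) = fun y => k₃ * (fun z => j₁ z 1) y
            + k₄ * (fun z => j₂ z 1) y from by
          funext y; rw [hJK K y]; show K 2 * j₁ y 1 + K 3 * j₂ y 1 = _; rw [hK2, hK3]]
        rw [avg_two Ω k₃ k₄ hI11 hI21, hj₁avg.2, hj₂avg.2]
        ring
    have hMv : Minf.mulVec K = ![g⁻¹*(k₁+k₄), g⁻¹*(k₂-k₃), g⁻¹*(k₃-k₂), g⁻¹*(k₁+k₄)] := by
      funext i
      rw [hMinf]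
      fin_cases i <;>
        simp [blockIRperp, Matrix.mulVec, dotProduct, Fin.sum_univ_four, hK] <;> ring
    have hFige : 0 ≤ ∫ x in Ω, F x := integral_nonneg hFpos
    have hFine : (∫ x in Ω, F x) ≠ 0 := by
      intro h0
      have hae : F =ᵐ[volume.restrict Ω] 0 :=
        (integral_eq_zero_iff_of_nonneg hFpos hFint).mp h0
      apply hnot K hKunit
      rw [hKavg, hMv]
      filter_upwards [hae] with x hx
      have hx0 : F x = 0 := hx
      rw [hFdef] at hx0
      obtain ⟨e1, e2, e3, e4⟩ := psd_kernel (σ x) σ₁ _ _ _ _ (hσpos x) (hσle x) (hcase x) hx0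
      have hu0 : JK K x 0 = (k₁ * j₁ x 0 + k₂ * j₂ x 0) := by
        rw [hJK K x]; show K 0 * j₁ x 0 + K 1 * j₂ x 0 = _; rw [hK0, hK1]
      have hu1 : JK K x 1 = (k₁ * j₁ x 1 + k₂ * j₂ x 1) := by
        rw [hJK K x]; show K 0 * j₁ x 1 + K 1 * j₂ x 1 = _; rw [hK0, hK1]
      have hu2 : JK K x 2 = (k₃ * j₁ x 0 + k₄ * j₂ x 0) := by
        rw [hJK K x]; show K 2 * j₁ x 0 + K 3 * j₂ x 0 = _; rw [hK2, hK3]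
      have hu3 : JK K x 3 = (k₃ * j₁ x 1 + k₄ * j₂ x 1) := by
        rw [hJK K x]; show K 2 * j₁ x 1 + K 3 * j₂ x 1 = _; rw [hK2, hK3]
      funext i
      fin_cases i
      · show (L x).mulVec (JK K x) 0 = g⁻¹*(k₁+k₄)
        rw [hL x]
        simp [Matrix.mulVec, dotProduct, Fin.sum_univ_four, Matrix.cons_val_zero,
          Matrix.cons_val_one, Matrix.head_cons, Matrix.cons_val_two, Matrix.cons_val_three,
          Matrix.vecHead, Matrix.vecTail, Matrix.of_apply]
        simp only [hu0, hu1, hu2, hu3]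
        linear_combination e1 + (g⁻¹ * (k₁ + k₄)) * hcfkey x
      · show (L x).mulVec (JK K x) 1 = g⁻¹*(k₂-k₃)
        rw [hL x]
        simp [Matrix.mulVec, dotProduct, Fin.sum_univ_four, Matrix.cons_val_zero,
          Matrix.cons_val_one, Matrix.head_cons, Matrix.cons_val_two, Matrix.cons_val_three,
          Matrix.vecHead, Matrix.vecTail, Matrix.of_apply]
        simp only [hu0, hu1, hu2, hu3]
        linear_combination e2 + (g⁻¹ * (k₂ - k₃)) * hcfkey x
      · show (L x).mulVec (JK K x) 2 = g⁻¹*(k₃-k₂)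
        rw [hL x]
        simp [Matrix.mulVec, dotProduct, Fin.sum_univ_four, Matrix.cons_val_zero,
          Matrix.cons_val_one, Matrix.head_cons, Matrix.cons_val_two, Matrix.cons_val_three,
          Matrix.vecHead, Matrix.vecTail, Matrix.of_apply]
        simp only [hu0, hu1, hu2, hu3]
        linear_combination e3 + (-(g⁻¹ * (k₂ - k₃))) * hcfkey x
      · show (L x).mulVec (JK K x) 3 = g⁻¹*(k₁+k₄)
        rw [hL x]
        simp [Matrix.mulVec, dotProduct, Fin.sum_univ_four, Matrix.cons_val_zero,
          Matrix.cons_val_one, Matrix.head_cons, Matrix.cons_val_two, Matrix.cons_val_three,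
          Matrix.vecHead, Matrix.vecTail, Matrix.of_apply]
        simp only [hu0, hu1, hu2, hu3]
        linear_combination e4 + (g⁻¹ * (k₁ + k₄)) * hcfkey x
    have hFipos : 0 < ∫ x in Ω, F x := lt_of_le_of_ne hFige (Ne.symm hFine)
    have havgFpos : 0 < avg Ω F := by
      unfold avg
      exact mul_pos (inv_pos.mpr hΩpos) hFipos
    have havg : avg Ω (fun x => (k₁^2 + k₃^2) * ((σ x)⁻¹ * (j₁ x 0 * j₁ x 0 + j₁ x 1 * j₁ x 1)) + (k₂^2 + k₄^2) * ((σ x)⁻¹ * (j₂ x 0 * j₂ x 0 + j₂ x 1 * j₂ x 1)) + (2*(k₁*k₂ + k₃*k₄)) * ((σ x)⁻¹ * (j₁ x 0 * j₂ x 0 + j₁ x 1 * j₂ x 1)) + (2 * σ₁⁻¹ * (k₁*k₄ - k₂*k₃)) * (j₁ x 0 * j₂ x 1 - j₁ x 1 * j₂ x 0) + (-2*((g⁻¹ * (k₁ + k₄))*k₁ - (g⁻¹ * (k₂ - k₃))*k₃)) * (j₁ x 0) + (-2*((g⁻¹ * (k₂ - k₃))*k₁ + (g⁻¹ * (k₁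 + k₄))*k₃)) * (j₁ x 1) + (-2*((g⁻¹ * (k₁ + k₄))*k₂ - (g⁻¹ * (k₂ - k₃))*k₄)) * (j₂ x 0) + (-2*((g⁻¹ * (k₂ - k₃))*k₂ + (g⁻¹ * (k₁ + k₄))*k₄)) * (j₂ x 1) + ((2*((g⁻¹ * (k₁ + k₄))^2 + (g⁻¹ * (k₂ - k₃))^2)) * (σ₁/2 - σ₁*σ₂/(σ₁+σ₂))) * (χ₁ x) + ((2*((g⁻¹ * (k₁ + k₄))^2 + (g⁻¹ * (k₂ - k₃))^2)) * (σ₁*σ₂/(σ₁+σ₂))))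
        = (k₁^2 + k₃^2) * avg Ω (fun x => ((σ x)⁻¹ * (j₁ x 0 * j₁ x 0 + j₁ x 1 * j₁ x 1))) + (k₂^2 + k₄^2) * avg Ω (fun x => ((σ x)⁻¹ * (j₂ x 0 * j₂ x 0 + j₂ x 1 * j₂ x 1)))
        + (2*(k₁*k₂ + k₃*k₄)) * avg Ω (fun x => ((σ x)⁻¹ * (j₁ x 0 * j₂ x 0 + j₁ x 1 * j₂ x 1))) + (2 * σ₁⁻¹ * (k₁*k₄ - k₂*k₃)) * avg Ω (fun x => (j₁ x 0 * j₂ x 1 - j₁ x 1 * j₂ x 0))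
        + (-2*((g⁻¹ * (k₁ + k₄))*k₁ - (g⁻¹ * (k₂ - k₃))*k₃)) * avg Ω (fun x => (j₁ x 0)) + (-2*((g⁻¹ * (k₂ - k₃))*k₁ + (g⁻¹ * (k₁ + k₄))*k₃)) * avg Ω (fun x => (j₁ x 1))
        + (-2*((g⁻¹ * (k₁ + k₄))*k₂ - (g⁻¹ * (k₂ - k₃))*k₄)) * avg Ω (fun x => (j₂ x 0)) + (-2*((g⁻¹ * (k₂ - k₃))*k₂ + (g⁻¹ * (k₁ + k₄))*k₄)) * avg Ω (fun x => (j₂ x 1))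
        + ((2*((g⁻¹ * (k₁ + k₄))^2 + (g⁻¹ * (k₂ - k₃))^2)) * (σ₁/2 - σ₁*σ₂/(σ₁+σ₂))) * avg Ω χ₁ + ((2*((g⁻¹ * (k₁ + k₄))^2 + (g⁻¹ * (k₂ - k₃))^2)) * (σ₁*σ₂/(σ₁+σ₂))) :=
      avg_comb10 Ω _ _ _ _ _ _ _ _ _ _ ht1 ht2 ht3 ht4 hI10 hI11 hI20 hI21 ht9 hfin hΩne
    have hPhi : avg Ω F = A 0 0 * (k₁^2+k₃^2) + A 1 1 * (k₂^2+k₄^2) + 2 * A 0 1 * (k₁*k₂+k₃*k₄) + 2*(b/σ₁)*(k₁*k₄-k₂*k₃) - g⁻¹*((k₁^2+k₂^2+k₃^2+k₄^2) + 2*(k₁*k₄-k₂*k₃)) := by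
      rw [hFeq, havg, ← hA11, ← hA22, ← hA12, ← hb, hj₁avg.1, hj₁avg.2, hj₂avg.1, hj₂avg.2,
        ← hf₁]
      linear_combination (2*((g⁻¹ * (k₁ + k₄))^2 + (g⁻¹ * (k₂ - k₃))^2)) * hhalf + ((k₁+k₄)^2 + (k₂-k₃)^2) * g⁻¹ * hgg
    rw [hPhi] at havgFpos
    exact havgFpos
  -- extend to all nonzero K by homogeneity
  have key' : ∀ k₁ k₂ k₃ k₄ : ℝ, k₁^2 + k₂^2 + k₃^2 + k₄^2 ≠ 0 →
      0 < A 0 0 * (k₁^2+k₃^2) + A 1 1 * (k₂^2+k₄^2) + 2 * A 0 1 * (k₁*k₂+k₃*k₄) + 2*(b/σ₁)*(k₁*k₄-k₂*k₃) - g⁻¹*((k₁^2+k₂^2+k₃^2+k₄^2) + 2*(k₁*k₄-k₂*k₃)) := by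
    intro k₁ k₂ k₃ k₄ hne
    have hpos : 0 < k₁^2 + k₂^2 + k₃^2 + k₄^2 :=
      lt_of_le_of_ne (by positivity) (Ne.symm hne)
    set n : ℝ := Real.sqrt (k₁^2 + k₂^2 + k₃^2 + k₄^2) with hn
    have hnpos : 0 < n := Real.sqrt_pos.mpr hpos
    have hnne : n ≠ 0 := ne_of_gt hnpos
    have hnsq : n^2 = k₁^2 + k₂^2 + k₃^2 + k₄^2 := Real.sq_sqrt hpos.le
    have hu : (k₁/n)^2 + (k₂/n)^2 + (k₃/n)^2 + (k₄/n)^2 = 1 := by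
      field_simp
      linarith [hnsq]
    have h := key (k₁/n) (k₂/n) (k₃/n) (k₄/n) hu
    have hrescale : (A 0 0 * ((k₁/n)^2+(k₃/n)^2) + A 1 1 * ((k₂/n)^2+(k₄/n)^2) + 2 * A 0 1 * ((k₁/n)*(k₂/n)+(k₃/n)*(k₄/n)) + 2*(b/σ₁)*((k₁/n)*(k₄/n)-(k₂/n)*(k₃/n)) - g⁻¹*(((k₁/n)^2+(k₂/n)^2+(k₃/n)^2+(k₄/n)^2) + 2*((k₁/n)*(k₄/n)-(k₂/n)*(k₃/n)))) * n^2
        = A 0 0 * (k₁^2+k₃^2) + A 1 1 * (k₂^2+k₄^2) + 2 * A 0 1 * (k₁*k₂+k₃*k₄) + 2*(b/σ₁)*(k₁*k₄-k₂*k₃) - g⁻¹*((k₁^2+k₂^2+k₃^2+k₄^2) + 2*(k₁*k₄-k₂*k₃)) := by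
      field_simp
    nlinarith [mul_pos h (pow_pos hnpos 2), hrescale]
  obtain ⟨hdet, hineq⟩ := algebra_final (A 0 0) (A 0 1) (A 1 1) (b/σ₁) g hgpos key'
  have hΔval : A.det - b^2/σ₁^2 = A 0 0 * A 1 1 - (A 0 1)^2 - (b/σ₁)^2 := by
    rw [Matrix.det_fin_two, hAsym, div_pow]
    ring
  have hΔ : 0 < A.det - b^2/σ₁^2 := by rw [hΔval]; linarith [hdet]
  refine ⟨hΔ, ?_⟩
  have htrval : A.trace - 2*b/σ₁ = (A 0 0 + A 1 1) - 2*(b/σ₁) := by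
    rw [Matrix.trace_fin_two]
    ring
  have hlt : (A.trace - 2*b/σ₁)/(A.det - b^2/σ₁^2) < g := by
    rw [div_lt_iff₀ hΔ, htrval, hΔval]
    nlinarith [hineq]
  have hcpos : 0 < (σ₁+σ₂)/(σ₁*(σ₁-σ₂)) := by
    apply div_pos hs12pos
    nlinarith
  rw [gt_iff_lt]
  calc (σ₁ + σ₂) / (σ₁ * (σ₁ - σ₂)) *
      ((A.trace - 2 * b / σ₁) / (A.det - b ^ 2 / σ₁ ^ 2) - 2 * σ₁ * σ₂ / (σ₁ + σ₂))
      < (σ₁ + σ₂) / (σ₁ * (σ₁ - σ₂)) * (g - 2 * σ₁ * σ₂ / (σ₁ + σ₂)) := by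
        apply mul_lt_mul_of_pos_left _ hcpos
        have : A.trace - 2 * b / σ₁ = A.trace - 2*b/σ₁ := by ring
        linarith [hlt]
    _ = f₁ := by
        rw [hg]
        have hne1 : σ₁ + σ₂ ≠ 0 := ne_of_gt hs12pos
        have hne2 : σ₁ * (σ₁ - σ₂) ≠ 0 := ne_of_gt (mul_pos hσ1pos (by linarith))
        have hne3 : σ₁ - σ₂ ≠ 0 := by linarith
        field_simp
        ring
end
end

section
/- Let j₁, j₂ ∈ L²(Ω;ℝ²) with ⟨j₁⟩ = (1,0)ᵀ and ⟨j₂⟩ = (0,1)ᵀ, let A = (a_{ij}) with a_{ij} = ⟨σ⁻¹ jᵢ·jⱼ⟩ and b = ⟨j₁·R⊥j₂⟩. Let L(x) := [[σ(x)⁻¹I₂, σ₁⁻¹R⊥],[−σ₁⁻¹R⊥, σ(x)⁻¹I₂]], g := f₁σ₁(σ₁−σ₂)/(σ₁+σ₂) + 2σ₁σ₂/(σ₁+σ₂), and M_∞ := (1/g)[[I₂,R⊥],[−R⊥,I₂]]. If there exists a nonzero K = (k₁,k₂,k₃,k₄) ∈ ℝ⁴ such that, with J_K := (k₁j₁+k₂j₂,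 k₃j₁+k₄j₂), one has L(x)J_K(x) = M_∞⟨J_K⟩ for almost every x ∈ Ω, then Tr A − 2b/σ₁ = g·(det A − b²/σ₁²); i.e., equality holds in the translation lower bound and the lower bound on the volume fraction is attained. -/
open MeasureTheory Matrix

noncomputable section

private lemma memLp2_mul_int {α : Type*} [MeasurableSpace α] {μ : Measure α}
    {f h : α → ℝ} (hf : MemLp f 2 μ) (hh : MemLp h 2 μ) :
    Integrable (fun x => f x * h x) μ := by
  have h1 := (hf.add hh).integrable_sq
  have h2 := hf.integrable_sq
  have h3 := hh.integrable_sq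
  exact (((h1.sub h2).sub h3).div_const 2).congr
    (Filter.Eventually.of_forall fun x => by
      simp only [Pi.sub_apply, Pi.add_apply]
      ring)

private lemma avg_congr_ae {Ω : Set (Fin 2 → ℝ)} {f h : (Fin 2 → ℝ) → ℝ}
    (hfg : f =ᵐ[volume.restrict Ω] h) : avg Ω f = avg Ω h := by
  unfold avg; rw [integral_congr_ae hfg]

private lemma avg_lin2 {Ω : Set (Fin 2 → ℝ)} (c₁ c₂ : ℝ) {f₁ f₂ : (Fin 2 → ℝ) → ℝ}
    (h₁ : Integrable f₁ (volume.restrict Ω)) (h₂ : Integrable f₂ (volume.restrict Ω)) :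
    avg Ω (fun x => c₁ * f₁ x + c₂ * f₂ x) = c₁ * avg Ω f₁ + c₂ * avg Ω f₂ := by
  unfold avg
  beta_reduce
  rw [integral_add (h₁.const_mul _) (h₂.const_mul _), integral_const_mul, integral_const_mul]
  ring

private lemma avg_lin3 {Ω : Set (Fin 2 → ℝ)} (c₁ c₂ c₃ : ℝ) {f₁ f₂ f₃ : (Fin 2 → ℝ) → ℝ}
    (h₁ : Integrable f₁ (volume.restrict Ω)) (h₂ : Integrable f₂ (volume.restrict Ω))
    (h₃ : Integrable f₃ (volume.restrict Ω)) :
    avg Ω (fun x => c₁ * f₁ x + c₂ * f₂ x + c₃ * f₃ x)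
      = c₁ * avg Ω f₁ + c₂ * avg Ω f₂ + c₃ * avg Ω f₃ := by
  unfold avg
  beta_reduce
  have h12 : Integrable (fun x => c₁ * f₁ x + c₂ * f₂ x) (volume.restrict Ω) :=
    (h₁.const_mul _).add (h₂.const_mul _)
  rw [integral_add h12 (h₃.const_mul _),
    integral_add (h₁.const_mul _) (h₂.const_mul _),
    integral_const_mul, integral_const_mul, integral_const_mul]
  ring

/-- If for some nonzero vector `K` the attainability condition `L J_K = M_∞⟨J_K⟩` holds
a.e., then equality holds in the translation lower bound and the lower bound on the volume
fraction is attained; see (3.1)–(3.8) of the paper. -/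
theorem lower_bound_attained_of_attainability_condition
    (Ω : Set (Fin 2 → ℝ)) (hΩmeas : MeasurableSet Ω)
    (hΩbdd : Bornology.IsBounded Ω) (hΩpos : 0 < (volume Ω).toReal)
    (χ₁ : (Fin 2 → ℝ) → ℝ) (hχmeas : Measurable χ₁)
    (hχ01 : ∀ x, χ₁ x = 0 ∨ χ₁ x = 1)
    (σ₁ σ₂ : ℝ) (hσ₂ : 0 < σ₂) (hσ : σ₂ < σ₁)
    (σ : (Fin 2 → ℝ) → ℝ)
    (hσdef : ∀ x, σ x = σ₁ * χ₁ x + σ₂ * (1 - χ₁ x))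
    (f₁ : ℝ) (hf₁ : f₁ = avg Ω χ₁)
    (j₁ j₂ : (Fin 2 → ℝ) → (Fin 2 → ℝ))
    (hj₁ : MemLp j₁ 2 (volume.restrict Ω))
    (hj₂ : MemLp j₂ 2 (volume.restrict Ω))
    -- normalization `⟨j₁⟩ = (1,0)ᵀ`, `⟨j₂⟩ = (0,1)ᵀ`
    (hj₁avg : avg Ω (fun x => j₁ x 0) = 1 ∧ avg Ω (fun x => j₁ x 1) = 0)
    (hj₂avg : avg Ω (fun x => j₂ x 0) = 0 ∧ avg Ω (fun x => j₂ x 1) = 1)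
    (A : Matrix (Fin 2) (Fin 2) ℝ)
    (hA11 : A 0 0 = avg Ω (fun x => (σ x)⁻¹ * (j₁ x ⬝ᵥ j₁ x)))
    (hA12 : A 0 1 = avg Ω (fun x => (σ x)⁻¹ * (j₁ x ⬝ᵥ j₂ x)))
    (hA21 : A 1 0 = avg Ω (fun x => (σ x)⁻¹ * (j₂ x ⬝ᵥ j₁ x)))
    (hA22 : A 1 1 = avg Ω (fun x => (σ x)⁻¹ * (j₂ x ⬝ᵥ j₂ x)))
    (b : ℝ) (hb : b = avg Ω (fun x => j₁ x ⬝ᵥ Rperp.mulVec (j₂ x)))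
    -- `L x` is the translated tensor at `c = 1/σ₁`
    (L : (Fin 2 → ℝ) → Matrix (Fin 4) (Fin 4) ℝ)
    (hL : ∀ x, L x = !![(σ x)⁻¹, 0, 0, σ₁⁻¹;
                        0, (σ x)⁻¹, -σ₁⁻¹, 0;
                        0, -σ₁⁻¹, (σ x)⁻¹, 0;
                        σ₁⁻¹, 0, 0, (σ x)⁻¹])
    (g : ℝ) (hg : g = f₁ * σ₁ * (σ₁ - σ₂) / (σ₁ + σ₂) + 2 * σ₁ * σ₂ / (σ₁ + σ₂))
    (Minf : Matrix (Fin 4) (Fin 4) ℝ) (hMinf : Minf = g⁻¹ • blockIRperp)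
    -- `J_K = (k₁j₁ + k₂j₂, k₃j₁ + k₄j₂)`
    (JK : (Fin 4 → ℝ) → (Fin 2 → ℝ) → (Fin 4 → ℝ))
    (hJK : ∀ K x, JK K x = ![K 0 * j₁ x 0 + K 1 * j₂ x 0,
                             K 0 * j₁ x 1 + K 1 * j₂ x 1,
                             K 2 * j₁ x 0 + K 3 * j₂ x 0,
                             K 2 * j₁ x 1 + K 3 * j₂ x 1])
    -- for some nonzero `K`, the attainability condition holds a.e.
    (hatt : ∃ K : Fin 4 → ℝ, K ≠ 0 ∧
      (∀ᵐ x ∂(volume.restrict Ω),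
          (L x).mulVec (JK K x) =
            Minf.mulVec (fun i => avg Ω (fun y => JK K y i)))) :
    A.trace - 2 * b / σ₁ = g * (A.det - b ^ 2 / σ₁ ^ 2) := by
  obtain ⟨K, hK, hae⟩ := hatt
  -- basic positivity facts
  have hσ₁pos : 0 < σ₁ := hσ₂.trans hσ
  have hσ₁ne : σ₁ ≠ 0 := ne_of_gt hσ₁pos
  have hf₁nonneg : 0 ≤ f₁ := by
    rw [hf₁]
    unfold avg
    apply mul_nonneg (inv_nonneg.mpr ENNReal.toReal_nonneg)
    apply integral_nonneg
    intro x
    rcases hχ01 x with h | h <;> simp [h]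
  have hgpos : 0 < g := by
    have hg' : g = (f₁ * σ₁ * (σ₁ - σ₂) + 2 * σ₁ * σ₂) / (σ₁ + σ₂) := by rw [hg]; ring
    rw [hg']
    apply div_pos
    · nlinarith [mul_nonneg (mul_nonneg hf₁nonneg hσ₁pos.le) (sub_nonneg.mpr hσ.le)]
    · linarith
  have hgne : g ≠ 0 := ne_of_gt hgpos
  -- finite measure
  have hfin : volume Ω ≠ ⊤ := by
    intro h
    rw [h] at hΩpos
    simp at hΩpos
  haveI : IsFiniteMeasure (volume.restrict Ω) :=
    ⟨by rwa [Measure.restrict_apply_univ, lt_top_iff_ne_top]⟩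
  -- component membership and integrability
  have m10 : MemLp (fun x => j₁ x 0) 2 (volume.restrict Ω) :=
    (ContinuousLinearMap.proj (R := ℝ) (φ := fun _ : Fin 2 => ℝ) 0).comp_memLp' hj₁
  have m11 : MemLp (fun x => j₁ x 1) 2 (volume.restrict Ω) :=
    (ContinuousLinearMap.proj (R := ℝ) (φ := fun _ : Fin 2 => ℝ) 1).comp_memLp' hj₁
  have m20 : MemLp (fun x => j₂ x 0) 2 (volume.restrict Ω) :=
    (ContinuousLinearMap.proj (R := ℝ) (φ := fun _ : Fin 2 => ℝ) 0).comp_memLp' hj₂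
  have m21 : MemLp (fun x => j₂ x 1) 2 (volume.restrict Ω) :=
    (ContinuousLinearMap.proj (R := ℝ) (φ := fun _ : Fin 2 => ℝ) 1).comp_memLp' hj₂
  have i10 : Integrable (fun x => j₁ x 0) (volume.restrict Ω) := m10.integrable one_le_two
  have i11 : Integrable (fun x => j₁ x 1) (volume.restrict Ω) := m11.integrable one_le_two
  have i20 : Integrable (fun x => j₂ x 0) (volume.restrict Ω) := m20.integrable one_le_two
  have i21 : Integrable (fun x => j₂ x 1) (volume.restrict Ω) := m21.integrable one_le_two
  -- σ facts
  have hσcases : ∀ x, σ x = σ₁ ∨ σ x = σ₂ := by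
    intro x
    rcases hχ01 x with h | h
    · right; rw [hσdef x, h]; ring
    · left; rw [hσdef x, h]; ring
  have hσmeas : Measurable σ := by
    have : σ = fun x => σ₁ * χ₁ x + σ₂ * (1 - χ₁ x) := funext hσdef
    rw [this]
    exact (hχmeas.const_mul σ₁).add ((measurable_const.sub hχmeas).const_mul σ₂)
  have hσinvmeas : AEStronglyMeasurable (fun x => (σ x)⁻¹) (volume.restrict Ω) :=
    hσmeas.inv.aestronglyMeasurable
  have hσinvbdd : ∃ C, ∀ x, ‖(σ x)⁻¹‖ ≤ C := by
    refine ⟨σ₂⁻¹, fun x => ?_⟩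
    have h1 : 0 < σ x := by rcases hσcases x with h | h <;> rw [h] <;> linarith
    have h2 : σ₂ ≤ σ x := by rcases hσcases x with h | h <;> rw [h] <;> linarith
    rw [Real.norm_eq_abs, abs_of_pos (inv_pos.mpr h1)]
    exact inv_anti₀ hσ₂ h2
  -- integrable quadratic quantities
  have id11 : Integrable (fun x => j₁ x 0 * j₁ x 0 + j₁ x 1 * j₁ x 1) (volume.restrict Ω) :=
    (memLp2_mul_int m10 m10).add (memLp2_mul_int m11 m11)
  have id12 : Integrable (fun x => j₁ x 0 * j₂ x 0 + j₁ x 1 * j₂ x 1) (volume.restrict Ω) :=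
    (memLp2_mul_int m10 m20).add (memLp2_mul_int m11 m21)
  have id22 : Integrable (fun x => j₂ x 0 * j₂ x 0 + j₂ x 1 * j₂ x 1) (volume.restrict Ω) :=
    (memLp2_mul_int m20 m20).add (memLp2_mul_int m21 m21)
  have if11 : Integrable (fun x => (σ x)⁻¹ * (j₁ x 0 * j₁ x 0 + j₁ x 1 * j₁ x 1))
      (volume.restrict Ω) := id11.bdd_mul hσinvmeas (ae_of_all _ hσinvbdd.choose_spec)
  have if12 : Integrable (fun x => (σ x)⁻¹ * (j₁ x 0 * j₂ x 0 + j₁ x 1 * j₂ x 1))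
      (volume.restrict Ω) := id12.bdd_mul hσinvmeas (ae_of_all _ hσinvbdd.choose_spec)
  have if22 : Integrable (fun x => (σ x)⁻¹ * (j₂ x 0 * j₂ x 0 + j₂ x 1 * j₂ x 1))
      (volume.restrict Ω) := id22.bdd_mul hσinvmeas (ae_of_all _ hσinvbdd.choose_spec)
  have ifr : Integrable (fun x => j₁ x 0 * j₂ x 1 - j₁ x 1 * j₂ x 0) (volume.restrict Ω) :=
    (memLp2_mul_int m10 m21).sub (memLp2_mul_int m11 m20)
  -- the averages of JK are K itself
  have hKavg : (fun i => avg Ω (fun y => JK K y i)) = K := by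
    have h0 : avg Ω (fun y => JK K y 0) = K 0 := by
      have h : (fun y => JK K y 0) = fun y => K 0 * (j₁ y 0) + K 1 * (j₂ y 0) := by
        funext y; rw [hJK]; simp
      rw [h, avg_lin2 _ _ i10 i20, hj₁avg.1, hj₂avg.1]; ring
    have h1 : avg Ω (fun y => JK K y 1) = K 1 := by
      have h : (fun y => JK K y 1) = fun y => K 0 * (j₁ y 1) + K 1 * (j₂ y 1) := by
        funext y; rw [hJK]; simp
      rw [h, avg_lin2 _ _ i11 i21, hj₁avg.2, hj₂avg.2]; ring
    have h2 : avg Ω (fun y => JK K y 2) = K 2 := by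
      have h : (fun y => JK K y 2) = fun y => K 2 * (j₁ y 0) + K 3 * (j₂ y 0) := by
        funext y; rw [hJK]; simp
      rw [h, avg_lin2 _ _ i10 i20, hj₁avg.1, hj₂avg.1]; ring
    have h3 : avg Ω (fun y => JK K y 3) = K 3 := by
      have h : (fun y => JK K y 3) = fun y => K 2 * (j₁ y 1) + K 3 * (j₂ y 1) := by
        funext y; rw [hJK]; simp
      rw [h, avg_lin2 _ _ i11 i21, hj₁avg.2, hj₂avg.2]; ring
    funext i
    fin_cases i
    exacts [h0, h1, h2, h3]
  rw [hKavg] at hae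
  -- main pointwise identities, a.e.
  have hS : ∀ᵐ x ∂(volume.restrict Ω),
      (K 0 * ((σ x)⁻¹ * (j₁ x 0 * j₁ x 0 + j₁ x 1 * j₁ x 1))
        + K 1 * ((σ x)⁻¹ * (j₁ x 0 * j₂ x 0 + j₁ x 1 * j₂ x 1))
        + (K 3 / σ₁) * (j₁ x 0 * j₂ x 1 - j₁ x 1 * j₂ x 0)
        = ((K 0 + K 3)/g) * (j₁ x 0) + ((K 1 - K 2)/g) * (j₁ x 1))
      ∧ (K 2 * ((σ x)⁻¹ * (j₁ x 0 * j₁ x 0 + j₁ x 1 * j₁ x 1))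
        + K 3 * ((σ x)⁻¹ * (j₁ x 0 * j₂ x 0 + j₁ x 1 * j₂ x 1))
        - (K 1 / σ₁) * (j₁ x 0 * j₂ x 1 - j₁ x 1 * j₂ x 0)
        = ((K 0 + K 3)/g) * (j₁ x 1) - ((K 1 - K 2)/g) * (j₁ x 0))
      ∧ (K 0 * ((σ x)⁻¹ * (j₁ x 0 * j₂ x 0 + j₁ x 1 * j₂ x 1))
        + K 1 * ((σ x)⁻¹ * (j₂ x 0 * j₂ x 0 + j₂ x 1 * j₂ x 1))
        - (K 2 / σ₁) * (j₁ x 0 * j₂ x 1 - j₁ x 1 * j₂ x 0)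
        = ((K 0 + K 3)/g) * (j₂ x 0) + ((K 1 - K 2)/g) * (j₂ x 1))
      ∧ (K 2 * ((σ x)⁻¹ * (j₁ x 0 * j₂ x 0 + j₁ x 1 * j₂ x 1))
        + K 3 * ((σ x)⁻¹ * (j₂ x 0 * j₂ x 0 + j₂ x 1 * j₂ x 1))
        + (K 0 / σ₁) * (j₁ x 0 * j₂ x 1 - j₁ x 1 * j₂ x 0)
        = ((K 0 + K 3)/g) * (j₂ x 1) - ((K 1 - K 2)/g) * (j₂ x 0)) := by
    filter_upwards [hae] with x hx
    have e0 : (σ x)⁻¹ * (K 0 * j₁ x 0 + K 1 * j₂ x 0)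
        + σ₁⁻¹ * (K 2 * j₁ x 1 + K 3 * j₂ x 1) = g⁻¹ * (K 0 + K 3) := by
      have h := congrFun hx 0
      simp [hL, hJK, hMinf, blockIRperp, Matrix.mulVec, dotProduct,
        Fin.sum_univ_four, Matrix.smul_apply, smul_eq_mul] at h
      linear_combination h
    have e1 : (σ x)⁻¹ * (K 0 * j₁ x 1 + K 1 * j₂ x 1)
        - σ₁⁻¹ * (K 2 * j₁ x 0 + K 3 * j₂ x 0) = g⁻¹ * (K 1 - K 2) := by
      have h := congrFun hx 1
      simp [hL, hJK, hMinf, blockIRperp, Matrix.mulVec, dotProduct,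
        Fin.sum_univ_four, Matrix.smul_apply, smul_eq_mul] at h
      linear_combination h
    have e2 : -(σ₁⁻¹ * (K 0 * j₁ x 1 + K 1 * j₂ x 1))
        + (σ x)⁻¹ * (K 2 * j₁ x 0 + K 3 * j₂ x 0) = g⁻¹ * (K 2 - K 1) := by
      have h := congrFun hx 2
      simp [hL, hJK, hMinf, blockIRperp, Matrix.mulVec, dotProduct,
        Fin.sum_univ_four, Matrix.smul_apply, smul_eq_mul] at h
      linear_combination h
    have e3 : σ₁⁻¹ * (K 0 * j₁ x 0 + K 1 * j₂ x 0)
        + (σ x)⁻¹ * (K 2 * j₁ x 1 + K 3 * j₂ x 1) = g⁻¹ * (K 0 + K 3) := by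
      have h := congrFun hx 3
      simp [hL, hJK, hMinf, blockIRperp, Matrix.mulVec, dotProduct,
        Fin.sum_univ_four, Matrix.smul_apply, smul_eq_mul] at h
      linear_combination h
    rcases hχ01 x with hph | hph
    · -- phase 2 : σ x = σ₂
      have hσx : σ x = σ₂ := by rw [hσdef x, hph]; ring
      rw [hσx] at e0 e1 e2 e3 ⊢
      have hinvlt : σ₁⁻¹ < σ₂⁻¹ := by
        apply inv_strictAnti₀ hσ₂ hσ
      have hne : σ₂⁻¹ - σ₁⁻¹ ≠ 0 := sub_ne_zero.mpr (ne_of_gt hinvlt)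
      have hY0 : (K 0 * j₁ x 0 + K 1 * j₂ x 0) - (K 2 * j₁ x 1 + K 3 * j₂ x 1) = 0 := by
        have h : (σ₂⁻¹ - σ₁⁻¹) *
            ((K 0 * j₁ x 0 + K 1 * j₂ x 0) - (K 2 * j₁ x 1 + K 3 * j₂ x 1)) = 0 := by
          linear_combination e0 - e3
        exact (mul_eq_zero.mp h).resolve_left hne
      have hY1 : (K 0 * j₁ x 1 + K 1 * j₂ x 1) + (K 2 * j₁ x 0 + K 3 * j₂ x 0) = 0 := by
        have h : (σ₂⁻¹ - σ₁⁻¹) *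
            ((K 0 * j₁ x 1 + K 1 * j₂ x 1) + (K 2 * j₁ x 0 + K 3 * j₂ x 0)) = 0 := by
          linear_combination e1 + e2
        exact (mul_eq_zero.mp h).resolve_left hne
      refine ⟨?_, ?_, ?_, ?_⟩
      · linear_combination (j₁ x 0 / 2) * e0 + (j₁ x 0 / 2) * e3 + (j₁ x 1 / 2) * e1
          - (j₁ x 1 / 2) * e2 + ((σ₂⁻¹ - σ₁⁻¹)/2) * (j₁ x 0 * hY0 + j₁ x 1 * hY1)
      · linear_combination (j₁ x 1 / 2) * e0 + (j₁ x 1 / 2) * e3 - (j₁ x 0 / 2) * e1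
          + (j₁ x 0 / 2) * e2 + ((σ₂⁻¹ - σ₁⁻¹)/2) * (-(j₁ x 1) * hY0 + j₁ x 0 * hY1)
      · linear_combination (j₂ x 0 / 2) * e0 + (j₂ x 0 / 2) * e3 + (j₂ x 1 / 2) * e1
          - (j₂ x 1 / 2) * e2 + ((σ₂⁻¹ - σ₁⁻¹)/2) * (j₂ x 0 * hY0 + j₂ x 1 * hY1)
      · linear_combination (j₂ x 1 / 2) * e0 + (j₂ x 1 / 2) * e3 - (j₂ x 0 / 2) * e1
          + (j₂ x 0 / 2) * e2 + ((σ₂⁻¹ - σ₁⁻¹)/2) * (-(j₂ x 1) * hY0 + j₂ x 0 * hY1)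
    · -- phase 1 : σ x = σ₁
      have hσx : σ x = σ₁ := by rw [hσdef x, hph]; ring
      rw [hσx] at e0 e1 e2 e3 ⊢
      refine ⟨?_, ?_, ?_, ?_⟩
      · linear_combination (j₁ x 0) * e0 + (j₁ x 1) * e1
      · linear_combination (j₁ x 1) * e0 - (j₁ x 0) * e1
      · linear_combination (j₂ x 0) * e0 + (j₂ x 1) * e1
      · linear_combination (j₂ x 1) * e0 - (j₂ x 0) * e1
  -- identify the entries of A with componentwise averages
  have hA11' : A 0 0 = avg Ω (fun x => (σ x)⁻¹ * (j₁ x 0 * j₁ x 0 + j₁ x 1 * j₁ x 1)) := by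
    rw [hA11]; congr 1; funext x; simp only [dotProduct, Fin.sum_univ_two]
  have hA12' : A 0 1 = avg Ω (fun x => (σ x)⁻¹ * (j₁ x 0 * j₂ x 0 + j₁ x 1 * j₂ x 1)) := by
    rw [hA12]; congr 1; funext x; simp only [dotProduct, Fin.sum_univ_two]
  have hA21' : A 1 0 = avg Ω (fun x => (σ x)⁻¹ * (j₁ x 0 * j₂ x 0 + j₁ x 1 * j₂ x 1)) := by
    rw [hA21]; congr 1; funext x; simp only [dotProduct, Fin.sum_univ_two]; ring
  have hb' : b = avg Ω (fun x => j₁ x 0 * j₂ x 1 - j₁ x 1 * j₂ x 0) := by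
    rw [hb]; congr 1; funext x
    simp only [Rperp, Matrix.mulVec, dotProduct, Fin.sum_univ_two, Matrix.of_apply, Matrix.cons_val',
      Matrix.cons_val_zero, Matrix.cons_val_one, Matrix.head_cons, Matrix.head_fin_const,
      Matrix.empty_val', Matrix.cons_val_fin_one]
    ring
  have hA22' : A 1 1 = avg Ω (fun x => (σ x)⁻¹ * (j₂ x 0 * j₂ x 0 + j₂ x 1 * j₂ x 1)) := by
    rw [hA22]; congr 1; funext x; simp only [dotProduct, Fin.sum_univ_two]
  -- the four averaged relations
  have E1 : K 0 * A 0 0 + K 1 * A 0 1 + (K 3 / σ₁) * b = (K 0 + K 3)/g := by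
    have hae1 : (fun x => K 0 * ((σ x)⁻¹ * (j₁ x 0 * j₁ x 0 + j₁ x 1 * j₁ x 1))
        + K 1 * ((σ x)⁻¹ * (j₁ x 0 * j₂ x 0 + j₁ x 1 * j₂ x 1))
        + (K 3 / σ₁) * (j₁ x 0 * j₂ x 1 - j₁ x 1 * j₂ x 0))
        =ᵐ[volume.restrict Ω]
        (fun x => ((K 0 + K 3)/g) * (j₁ x 0) + ((K 1 - K 2)/g) * (j₁ x 1)) :=
      hS.mono fun x hx => by linear_combination hx.1
    have h := avg_congr_ae hae1
    rw [avg_lin3 _ _ _ if11 if12 ifr, avg_lin2 _ _ i10 i11, hj₁avg.1, hj₁avg.2] at h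
    rw [hA11', hA12', hb']
    linear_combination h
  have E2 : K 2 * A 0 0 + K 3 * A 0 1 - (K 1 / σ₁) * b = (K 2 - K 1)/g := by
    have hae2 : (fun x => K 2 * ((σ x)⁻¹ * (j₁ x 0 * j₁ x 0 + j₁ x 1 * j₁ x 1))
        + K 3 * ((σ x)⁻¹ * (j₁ x 0 * j₂ x 0 + j₁ x 1 * j₂ x 1))
        + (-(K 1 / σ₁)) * (j₁ x 0 * j₂ x 1 - j₁ x 1 * j₂ x 0))
        =ᵐ[volume.restrict Ω]
        (fun x => ((K 0 + K 3)/g) * (j₁ x 1) + (-((K 1 - K 2)/g)) * (j₁ x 0)) :=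
      hS.mono fun x hx => by linear_combination hx.2.1
    have h := avg_congr_ae hae2
    rw [avg_lin3 _ _ _ if11 if12 ifr, avg_lin2 _ _ i11 i10, hj₁avg.1, hj₁avg.2] at h
    rw [hA11', hA12', hb']
    linear_combination h
  have E3 : K 0 * A 0 1 + K 1 * A 1 1 - (K 2 / σ₁) * b = (K 1 - K 2)/g := by
    have hae3 : (fun x => K 0 * ((σ x)⁻¹ * (j₁ x 0 * j₂ x 0 + j₁ x 1 * j₂ x 1))
        + K 1 * ((σ x)⁻¹ * (j₂ x 0 * j₂ x 0 + j₂ x 1 * j₂ x 1))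
        + (-(K 2 / σ₁)) * (j₁ x 0 * j₂ x 1 - j₁ x 1 * j₂ x 0))
        =ᵐ[volume.restrict Ω]
        (fun x => ((K 0 + K 3)/g) * (j₂ x 0) + ((K 1 - K 2)/g) * (j₂ x 1)) :=
      hS.mono fun x hx => by linear_combination hx.2.2.1
    have h := avg_congr_ae hae3
    rw [avg_lin3 _ _ _ if12 if22 ifr, avg_lin2 _ _ i20 i21, hj₂avg.1, hj₂avg.2] at h
    rw [hA12', hA22', hb']
    linear_combination h
  have E4 : K 2 * A 0 1 + K 3 * A 1 1 + (K 0 / σ₁) * b = (K 0 + K 3)/g := by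
    have hae4 : (fun x => K 2 * ((σ x)⁻¹ * (j₁ x 0 * j₂ x 0 + j₁ x 1 * j₂ x 1))
        + K 3 * ((σ x)⁻¹ * (j₂ x 0 * j₂ x 0 + j₂ x 1 * j₂ x 1))
        + (K 0 / σ₁) * (j₁ x 0 * j₂ x 1 - j₁ x 1 * j₂ x 0))
        =ᵐ[volume.restrict Ω]
        (fun x => ((K 0 + K 3)/g) * (j₂ x 1) + (-((K 1 - K 2)/g)) * (j₂ x 0)) :=
      hS.mono fun x hx => by linear_combination hx.2.2.2
    have h := avg_congr_ae hae4
    rw [avg_lin3 _ _ _ if12 if22 ifr, avg_lin2 _ _ i21 i20, hj₂avg.1, hj₂avg.2] at h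
    rw [hA12', hA22', hb']
    linear_combination h
  -- the determinant-type identity
  set p : ℝ := (A 0 0 - 1/g) * (A 1 1 - 1/g) - (A 0 1)^2 - (1/g - b/σ₁)^2 with hp_def
  have hp0 : p * K 0 = 0 := by
    rw [hp_def]
    linear_combination (A 1 1 - 1/g) * E1 - A 0 1 * E3 + (1/g - b/σ₁) * E4
  have hp1 : p * K 1 = 0 := by
    rw [hp_def]
    linear_combination (A 0 0 - 1/g) * E3 - A 0 1 * E1 - (1/g - b/σ₁) * E2
  have hp2 : p * K 2 = 0 := by
    rw [hp_def]
    linear_combination (A 1 1 - 1/g) * E2 - A 0 1 * E4 - (1/g - b/σ₁) * E3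
  have hp3 : p * K 3 = 0 := by
    rw [hp_def]
    linear_combination (A 0 0 - 1/g) * E4 - A 0 1 * E2 + (1/g - b/σ₁) * E1
  have hKi : ∃ i, K i ≠ 0 := by
    by_contra h
    push_neg at h
    exact hK (funext fun i => h i)
  have hp : p = 0 := by
    obtain ⟨i, hi⟩ := hKi
    fin_cases i
    · exact (mul_eq_zero.mp hp0).resolve_right hi
    · exact (mul_eq_zero.mp hp1).resolve_right hi
    · exact (mul_eq_zero.mp hp2).resolve_right hi
    · exact (mul_eq_zero.mp hp3).resolve_right hi
  -- conclude
  rw [hp_def] at hp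
  rw [Matrix.trace_fin_two, Matrix.det_fin_two, hA21', ← hA12']
  have expand : (A 0 0 - 1/g) * (A 1 1 - 1/g) - (A 0 1)^2 - (1/g - b/σ₁)^2
      = A 0 0 * A 1 1 - A 0 1 ^ 2 - b^2/σ₁^2 - (1/g) * (A 0 0 + A 1 1 - 2*b/σ₁) := by
    field_simp
    ring
  rw [expand] at hp
  have : A 0 0 * A 1 1 - A 0 1 ^ 2 - b^2/σ₁^2 = (1/g) * (A 0 0 + A 1 1 - 2*b/σ₁) := by
    linarith
  rw [eq_comm, ← sub_eq_zero]
  field_simp at this ⊢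
  linarith [this]
end
end

section
/- Let M be a real symmetric 2×2 matrix and σ₁ > σ₂ > 0. For t ∈ ℝ define the 2×2 matrix N(t) := σ₂⁻¹I₂ − tσ₂⁻²M and φ(t) := (Tr N(t) − 2/σ₁)/(det N(t) − 1/σ₁²). Then φ is defined in a neighborhood of t = 0, φ(0) = 2σ₁σ₂/(σ₁+σ₂), and lim_{t→0} (1/t)·((σ₁+σ₂)/(σ₁(σ₁−σ₂)))·( φ(t) − 2σ₁σ₂/(σ₁+σ₂) ) = σ₁·Tr M/(σ₁² − σ₂²). -/
open Matrix Filter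

noncomputable section

private lemma aux_cancel (t K p q : ℝ) (ht : t ≠ 0) (hq : q ≠ 0) :
    1 / t * K * (t * p / q) = K * p / q := by
  field_simp

/-- Small-volume-fraction asymptotic expansion of the translation lower bound, giving the
Capdeboscq–Vogelius lower bound (formulas (6.19)–(6.20) of the paper). -/
theorem lower_bound_small_volume_asymptotics
    (M : Matrix (Fin 2) (Fin 2) ℝ) (hMsymm : M.IsSymm)
    (σ₁ σ₂ : ℝ) (hσ₂ : 0 < σ₂) (hσ : σ₂ < σ₁)
    (N : ℝ → Matrix (Fin 2) (Fin 2) ℝ)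
    (hN : ∀ t, N t = σ₂⁻¹ • (1 : Matrix (Fin 2) (Fin 2) ℝ) - (t * (σ₂ ^ 2)⁻¹) • M)
    (φ : ℝ → ℝ)
    (hφ : ∀ t, φ t = ((N t).trace - 2 / σ₁) / ((N t).det - 1 / σ₁ ^ 2)) :
    (∃ δ > 0, ∀ t : ℝ, |t| < δ → (N t).det - 1 / σ₁ ^ 2 ≠ 0) ∧
    φ 0 = 2 * σ₁ * σ₂ / (σ₁ + σ₂) ∧
    Tendsto (fun t =>
        (1 / t) * ((σ₁ + σ₂) / (σ₁ * (σ₁ - σ₂))) * (φ t - 2 * σ₁ * σ₂ / (σ₁ + σ₂)))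
      (nhdsWithin 0 {0}ᶜ)
      (nhds (σ₁ * M.trace / (σ₁ ^ 2 - σ₂ ^ 2))) := by
  have hσ₁ : (0:ℝ) < σ₁ := hσ₂.trans hσ
  have h1 : σ₁ ≠ 0 := ne_of_gt hσ₁
  have h2 : σ₂ ≠ 0 := ne_of_gt hσ₂
  have hsum : σ₁ + σ₂ ≠ 0 := by positivity
  have hdiff : σ₁ - σ₂ ≠ 0 := sub_ne_zero.2 (ne_of_gt hσ)
  have hsq : σ₂ ^ 2 < σ₁ ^ 2 := by nlinarith
  have hne2 : σ₁ ^ 2 - σ₂ ^ 2 ≠ 0 := ne_of_gt (sub_pos.2 hsq)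
  set a : ℝ := M 0 0 + M 1 1 with ha
  set d : ℝ := M 0 0 * M 1 1 - M 0 1 * M 1 0 with hd
  have htrM : M.trace = a := by rw [Matrix.trace_fin_two]
  have htr : ∀ t, (N t).trace = 2 * σ₂⁻¹ - t * (σ₂ ^ 2)⁻¹ * a := by
    intro t
    rw [hN, Matrix.trace_fin_two]
    simp [Matrix.one_apply, ha]
    ring
  have hdet : ∀ t, (N t).det =
      (σ₂⁻¹ - t * (σ₂ ^ 2)⁻¹ * M 0 0) * (σ₂⁻¹ - t * (σ₂ ^ 2)⁻¹ * M 1 1)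
        - (t * (σ₂ ^ 2)⁻¹ * M 0 1) * (t * (σ₂ ^ 2)⁻¹ * M 1 0) := by
    intro t
    rw [hN, Matrix.det_fin_two]
    simp [Matrix.one_apply]
  set Dp : ℝ → ℝ := fun t => (1 / σ₂ ^ 2 - 1 / σ₁ ^ 2) - t * a / σ₂ ^ 3 + t ^ 2 * d / σ₂ ^ 4
    with hDp
  have hDeq : ∀ t, (N t).det - 1 / σ₁ ^ 2 = Dp t := by
    intro t
    rw [hdet, hDp]
    field_simp
    ring
  have hD0 : Dp 0 = 1 / σ₂ ^ 2 - 1 / σ₁ ^ 2 := by simp [hDp]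
  have hD0pos : 0 < 1 / σ₂ ^ 2 - 1 / σ₁ ^ 2 := by
    rw [sub_pos, div_lt_div_iff₀ (by positivity) (by positivity)]
    nlinarith
  have hD0ne : Dp 0 ≠ 0 := by rw [hD0]; exact ne_of_gt hD0pos
  have hDcont : Continuous Dp := by rw [hDp]; fun_prop
  have hev : ∀ᶠ t in nhds (0:ℝ), Dp t ≠ 0 :=
    (hDcont.continuousAt (x := 0)).eventually_ne hD0ne
  obtain ⟨ε, hε, hball⟩ := Metric.eventually_nhds_iff.1 hev
  refine ⟨⟨ε, hε, fun t ht => ?_⟩, ?_, ?_⟩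
  · rw [hDeq]
    exact hball (by simpa [Real.dist_eq] using ht)
  · rw [hφ, hDeq, hD0, htr]
    rw [div_eq_div_iff (ne_of_gt hD0pos) hsum]
    field_simp
    ring
  · set c : ℝ := 2 * σ₁ * σ₂ / (σ₁ + σ₂) with hc
    set K : ℝ := (σ₁ + σ₂) / (σ₁ * (σ₁ - σ₂)) with hK
    set P : ℝ → ℝ := fun t => a / σ₂ ^ 2 * (c / σ₂ - 1) - t * c * d / σ₂ ^ 4 with hP
    set h : ℝ → ℝ := fun t => K * P t / Dp t with hh
    have hcont : ContinuousAt h 0 := by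
      apply ContinuousAt.div
      · fun_prop
      · exact hDcont.continuousAt
      · exact hD0ne
    have hval : h 0 = σ₁ * M.trace / (σ₁ ^ 2 - σ₂ ^ 2) := by
      have e1 : P 0 = a / σ₂ ^ 2 * (c / σ₂ - 1) := by simp [hP]
      rw [hh]
      show K * P 0 / Dp 0 = _
      rw [e1, hD0, htrM, hK, hc]
      rw [div_eq_div_iff (ne_of_gt hD0pos) hne2]
      field_simp
      ring
    have hlim : Tendsto h (nhdsWithin 0 {0}ᶜ) (nhds (σ₁ * M.trace / (σ₁ ^ 2 - σ₂ ^ 2))) := by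
      rw [← hval]
      exact hcont.tendsto.mono_left nhdsWithin_le_nhds
    refine Tendsto.congr' ?_ hlim
    have hmem : {t : ℝ | Dp t ≠ 0} ∈ nhdsWithin (0:ℝ) {0}ᶜ :=
      nhdsWithin_le_nhds hev
    filter_upwards [hmem, self_mem_nhdsWithin] with t hDt ht0
    have ht : (t:ℝ) ≠ 0 := ht0
    -- numerator identity: (trace - 2/σ₁) - c * Dp t = t * P t
    have hnum : ((N t).trace - 2 / σ₁) - c * Dp t = t * P t := by
      rw [htr, hDp, hP, hc]
      field_simp
      ring
    have hsub : φ t - c = (t * P t) / Dp t := by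
      rw [hφ, hDeq, ← hnum]
      field_simp
    show h t = 1 / t * K * (φ t - c)
    rw [hh, hsub]
    exact (aux_cancel t K (P t) (Dp t) ht hDt).symm
end
end
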